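/- arXiv:2012.01374 — 10 statements merged into one kernel-verified Lean document; each statement's English description precedes it below -/
import Mathlib

section
/- Let G be a finite non-abelian group, H a subgroup of G with H ≠ Z(H,G), and g ∈ K(H,G) with g ≠ 1 and g² ≠ 1. Let x ∈ H \ Z(H,G). (i) If exactly one of the two statements 'x is conjugate in G to xg' and 'x is conjugate in G to xg⁻¹' holds, then the degree of x in Δ_{H,G}^g equals |G| - |Z(H,G)| - |C_G(x)| - 1. (ii) If x is conjugate in G to both xg and xg⁻¹, then the degree of x in Δ_{H,G}^g equals |G| - |Z(H,G)| - 2|C_G(x)| - 1. -/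
open SimpleGraph

/-- `Z(H,G)`: the set of elements of `H` commuting with every element of `G`. -/
def relCenter (G : Type*) [Group G] (H : Subgroup G) : Set G :=
  {x : G | x ∈ H ∧ ∀ y : G, x * y = y * x}

/-- The commutator `[x,y] = x⁻¹y⁻¹xy`. -/
def comm' {G : Type*} [Group G] (x y : G) : G :=
  x⁻¹ * y⁻¹ * x * y

lemma comm'_swap {G : Type*} [Group G] (x y : G) :
    comm' y x = (comm' x y)⁻¹ := by
  simp only [comm', mul_inv_rev, inv_inv, mul_assoc]

/-- `K(H,G) = {[x,y] : x ∈ H, y ∈ G}`. -/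
def relComm (G : Type*) [Group G] (H : Subgroup G) : Set G :=
  {w : G | ∃ x ∈ H, ∃ y : G, comm' x y = w}

/-- The graph `Δ_{H,G}^g`: vertices are the elements of `G \ Z(H,G)`, and two distinct
vertices `x`, `y` are adjacent iff (`x ∈ H` or `y ∈ H`) and `[x,y] ≠ g, g⁻¹`. -/
def gnc (G : Type*) [Group G] (H : Subgroup G) (g : G) :
    SimpleGraph (((relCenter G H)ᶜ : Set G)) where
  Adj x y := x ≠ y ∧ ((x : G) ∈ H ∨ (y : G) ∈ H) ∧
    comm' (x : G) (y : G) ≠ g ∧ comm' (x : G) (y : G) ≠ g⁻¹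
  symm := by
    constructor
    rintro x y ⟨hxy, hH, h1, h2⟩
    refine ⟨fun h => hxy h.symm, hH.symm, ?_, ?_⟩
    · rw [comm'_swap, ne_eq, inv_eq_iff_eq_inv]
      exact h2
    · rw [comm'_swap, ne_eq, inv_eq_iff_eq_inv, inv_inv]
      exact h1
  loopless := by
    constructor
    rintro x ⟨h, -⟩
    exact h rfl


open Finset in
open scoped Classical in
lemma conj_filter_card {G : Type*} [Group G] [Fintype G] (x y₀ : G) :
    (Finset.univ.filter fun y => comm' x y = comm' x y₀).card
      = (Finset.univ.filter fun y => x * y = y * x).card := by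
  refine Finset.card_nbij' (fun y => y * y₀⁻¹) (fun c => c * y₀) ?_ ?_ ?_ ?_
  · intro y hy
    simp only [Finset.mem_coe, mem_filter, mem_univ, true_and, comm'] at hy ⊢
    have h2 : y⁻¹ * x * y = y₀⁻¹ * x * y₀ := by
      apply mul_left_cancel (a := x⁻¹)
      simpa [mul_assoc] using hy
    calc x * (y * y₀⁻¹) = y * (y⁻¹ * x * y) * y₀⁻¹ := by group
      _ = y * (y₀⁻¹ * x * y₀) * y₀⁻¹ := by rw [h2]
      _ = y * y₀⁻¹ * x := by group
  · intro c hc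
    simp only [Finset.mem_coe, mem_filter, mem_univ, true_and, comm', Set.mem_setOf_eq] at hc ⊢
    have h3 : c⁻¹ * x * c = x := by
      rw [mul_assoc, hc]; group
    refine Finset.mem_filter.2 ⟨Finset.mem_univ _, ?_⟩
    calc x⁻¹ * (c * y₀)⁻¹ * x * (c * y₀) = x⁻¹ * y₀⁻¹ * (c⁻¹ * x * c) * y₀ := by group
      _ = x⁻¹ * y₀⁻¹ * x * y₀ := by rw [h3]
  · intro a _; group
  · intro a _; group

lemma comm'_eq_iff {G : Type*} [Group G] (x y w : G) :
    comm' x y = w ↔ y⁻¹ * x * y = x * w := by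
  constructor <;> intro h
  · calc y⁻¹ * x * y = x * comm' x y := by rw [comm']; group
      _ = x * w := by rw [h]
  · calc comm' x y = x⁻¹ * (y⁻¹ * x * y) := by rw [comm']; group
      _ = x⁻¹ * (x * w) := by rw [h]
      _ = w := by group

open scoped Classical in
/-- degree of a vertex `x ∈ H \ Z(H,G)` when `g ≠ 1`, `g² ≠ 1`. -/
theorem stmt1 {G : Type*} [Group G] [Fintype G]
    (hna : ∃ x y : G, x * y ≠ y * x)
    (H : Subgroup G) (hH : (H : Set G) ≠ relCenter G H)
    (g : G) (hgK : g ∈ relComm G H) (hg1 : g ≠ 1) (hg2 : g ^ 2 ≠ 1)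
    (x : G) (hxH : x ∈ H) (hx : x ∉ relCenter G H) :
    ((((∃ z : G, z⁻¹ * x * z = x * g) ∧ ¬ (∃ z : G, z⁻¹ * x * z = x * g⁻¹)) ∨
      ((¬ ∃ z : G, z⁻¹ * x * z = x * g) ∧ (∃ z : G, z⁻¹ * x * z = x * g⁻¹))) →
      (gnc G H g).degree ⟨x, hx⟩
        = Nat.card G - Nat.card (relCenter G H)
            - Nat.card (Subgroup.centralizer ({x} : Set G)) - 1) ∧
    (((∃ z : G, z⁻¹ * x * z = x * g) ∧ (∃ z : G, z⁻¹ * x * z = x * g⁻¹)) →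
      (gnc G H g).degree ⟨x, hx⟩
        = Nat.card G - Nat.card (relCenter G H)
            - 2 * Nat.card (Subgroup.centralizer ({x} : Set G)) - 1) := by
  classical
  have hg1' : g⁻¹ ≠ 1 := inv_ne_one.2 hg1
  have hgg : g ≠ g⁻¹ := by
    intro h
    apply hg2
    rw [pow_two]
    nth_rewrite 2 [h]
    group
  -- degree as a filter card over G
  have hdeg : (gnc G H g).degree ⟨x, hx⟩ =
      (Finset.univ.filter fun y : G =>
        ¬(y ∈ relCenter G H ∨ y = x ∨ comm' x y = g ∨ comm' x y = g⁻¹)).card := by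
    rw [SimpleGraph.degree]
    refine Finset.card_bij (fun a _ => (a : G)) ?_ ?_ ?_
    · intro a ha
      rw [SimpleGraph.mem_neighborFinset] at ha
      obtain ⟨hne, -, h1, h2⟩ := ha
      simp only [Finset.mem_filter, Finset.mem_univ, true_and]
      push_neg
      exact ⟨a.prop, fun hax => hne (Subtype.ext hax.symm), h1, h2⟩
    · intro a₁ _ a₂ _ h; exact Subtype.ext h
    · intro b hb
      simp only [Finset.mem_filter, Finset.mem_univ, true_and] at hb
      push_neg at hb
      obtain ⟨hbZ, hbx, h1, h2⟩ := hb
      refine ⟨⟨b, hbZ⟩, ?_, rfl⟩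
      rw [SimpleGraph.mem_neighborFinset]
      exact ⟨fun h => hbx (congrArg Subtype.val h).symm, Or.inl hxH, h1, h2⟩
  have hnot : (Finset.univ.filter fun y : G =>
        ¬(y ∈ relCenter G H ∨ y = x ∨ comm' x y = g ∨ comm' x y = g⁻¹)).card
      = Fintype.card G - (Finset.univ.filter fun y : G =>
        (y ∈ relCenter G H ∨ y = x ∨ comm' x y = g ∨ comm' x y = g⁻¹)).card := by
    rw [Finset.filter_not, Finset.card_sdiff_of_subset (Finset.filter_subset _ _), Finset.card_univ]
  -- disjointness facts
  have hcommZ : ∀ y : G, y ∈ relCenter G H → comm' x y = 1 := by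
    intro y hy
    have h := hy.2 x
    rw [comm', mul_assoc, mul_assoc, ← h]
    group
  have hcxx : comm' x x = 1 := by rw [comm']; group
  have dZ : Disjoint (Finset.univ.filter fun y : G => y ∈ relCenter G H)
      ((Finset.univ.filter fun y : G => y = x) ∪
        ((Finset.univ.filter fun y : G => comm' x y = g) ∪
          (Finset.univ.filter fun y : G => comm' x y = g⁻¹))) := by
    rw [Finset.disjoint_left]
    intro y hy hy'
    simp only [Finset.mem_filter, Finset.mem_univ, true_and, Finset.mem_union] at hy hy'
    rcases hy' with rfl | h | h
    · exact hx hy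
    · exact hg1 (h.symm.trans (hcommZ y hy))
    · exact hg1' (h.symm.trans (hcommZ y hy))
  have dX : Disjoint (Finset.univ.filter fun y : G => y = x)
      ((Finset.univ.filter fun y : G => comm' x y = g) ∪
        (Finset.univ.filter fun y : G => comm' x y = g⁻¹)) := by
    rw [Finset.disjoint_left]
    intro y hy hy'
    simp only [Finset.mem_filter, Finset.mem_univ, true_and, Finset.mem_union] at hy hy'
    subst hy
    rcases hy' with h | h
    · exact hg1 (h.symm.trans hcxx)
    · exact hg1' (h.symm.trans hcxx)
  have dA : Disjoint (Finset.univ.filter fun y : G => comm' x y = g)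
      (Finset.univ.filter fun y : G => comm' x y = g⁻¹) := by
    rw [Finset.disjoint_left]
    intro y hy hy'
    simp only [Finset.mem_filter, Finset.mem_univ, true_and] at hy hy'
    exact hgg (hy ▸ hy')
  have hXcard : (Finset.univ.filter fun y : G => y = x).card = 1 := by
    have hfe : (Finset.univ.filter fun y : G => y = x) = {x} := by
      ext y; simp
    rw [hfe, Finset.card_singleton]
  -- card of conjugacy filters
  have hApos : ∀ w : G, (∃ z : G, z⁻¹ * x * z = x * w) →
      (Finset.univ.filter fun y : G => comm' x y = w).card
        = (Finset.univ.filter fun y : G => x * y = y * x).card := by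
    intro w hw
    obtain ⟨z, hz⟩ := hw
    have hz' : comm' x z = w := (comm'_eq_iff x z w).2 hz
    rw [← hz']
    exact conj_filter_card x z
  have hAzero : ∀ w : G, ¬(∃ z : G, z⁻¹ * x * z = x * w) →
      (Finset.univ.filter fun y : G => comm' x y = w).card = 0 := by
    intro w hw
    rw [Finset.card_eq_zero, Finset.filter_eq_empty_iff]
    intro y _ hy
    exact hw ⟨y, (comm'_eq_iff x y w).1 hy⟩
  -- Nat.card conversions
  have hn : Nat.card G = Fintype.card G := Nat.card_eq_fintype_card
  have hZc : Nat.card (relCenter G H)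
      = (Finset.univ.filter fun y : G => y ∈ relCenter G H).card := by
    rw [Nat.card_eq_fintype_card, Fintype.card_subtype]
  have hCc : Nat.card (Subgroup.centralizer ({x} : Set G))
      = (Finset.univ.filter fun y : G => x * y = y * x).card := by
    rw [Nat.card_eq_fintype_card, Fintype.card_subtype]
    congr 1
    apply Finset.filter_congr
    intro y _
    simp only [Subgroup.mem_centralizer_singleton_iff]
    exact eq_comm
  have hsplit : (Finset.univ.filter fun y : G =>
        (y ∈ relCenter G H ∨ y = x ∨ comm' x y = g ∨ comm' x y = g⁻¹)).card
      = (Finset.univ.filter fun y : G => y ∈ relCenter G H).card +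
        (1 + ((Finset.univ.filter fun y : G => comm' x y = g).card +
          (Finset.univ.filter fun y : G => comm' x y = g⁻¹).card)) := by
    rw [Finset.filter_or, Finset.filter_or, Finset.filter_or,
      Finset.card_union_of_disjoint dZ, Finset.card_union_of_disjoint dX,
      Finset.card_union_of_disjoint dA, hXcard]
  constructor
  · rintro (⟨h1, h2⟩ | ⟨h1, h2⟩)
    · have ha := hApos g h1
      have hb := hAzero g⁻¹ h2
      rw [hdeg, hnot, hsplit, ha, hb, hn, hZc, hCc]
      omega
    · have ha := hAzero g h1
      have hb := hApos g⁻¹ h2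
      rw [hdeg, hnot, hsplit, ha, hb, hn, hZc, hCc]
      omega
  · rintro ⟨h1, h2⟩
    have ha := hApos g h1
    have hb := hApos g⁻¹ h2
    rw [hdeg, hnot, hsplit, ha, hb, hn, hZc, hCc]
    omega
end

section
/- Let G be a finite non-abelian group, H a subgroup of G with H ≠ Z(H,G), and g ∈ K(H,G) with g ≠ 1 and g² = 1. If x ∈ G \ H and there exists h ∈ H with h⁻¹xh = xg, then the degree of x in Δ_{H,G}^g equals |H| - |Z(H,G)| - |C_H(x)|. -/
open SimpleGraph

/-- `C_H(x) = {h ∈ H : hx = xh}`. -/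
def cH {G : Type*} [Group G] (H : Subgroup G) (x : G) : Set G :=
  {h : G | h ∈ H ∧ h * x = x * h}

open scoped Classical in
/-- degree of a vertex `x ∈ G \ H` when `g ≠ 1`, `g² = 1` and `x` is
conjugate to `xg` by an element of `H`. -/
theorem stmt5 {G : Type*} [Group G] [Fintype G]
    (hna : ∃ x y : G, x * y ≠ y * x)
    (H : Subgroup G) (hH : (H : Set G) ≠ relCenter G H)
    (g : G) (hgK : g ∈ relComm G H) (hg1 : g ≠ 1) (hg2 : g ^ 2 = 1)
    (x : G) (hxH : x ∉ H)
    (hconj : ∃ h ∈ H, h⁻¹ * x * h = x * g) :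
    (gnc G H g).degree ⟨x, by exact fun h => hxH h.1⟩
      = Nat.card H - Nat.card (relCenter G H) - Nat.card (cH H x) := by
  classical
  obtain ⟨h, hhH, hhx⟩ := hconj
  have hginv : g⁻¹ = g := by
    rw [pow_two] at hg2
    exact inv_eq_of_mul_eq_one_left hg2
  set Zs : Set G := relCenter G H with hZs
  set T : Set G := {y : G | y ∈ H ∧ comm' x y = g} with hT
  set Cs : Set G := cH H x with hCs
  have hZsub : Zs ⊆ (H : Set G) := fun z hz => hz.1
  have hTsub : T ⊆ (H : Set G) \ Zs := by
    rintro y ⟨hyH, hyc⟩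
    refine ⟨hyH, fun hyZ => hg1 ?_⟩
    have hcom : y⁻¹ * x = x * y⁻¹ := (Commute.inv_left (hyZ.2 x)).eq
    rw [← hyc]
    simp [comm', mul_assoc, hcom]
  -- the commutator equation: comm' x h = g
  have hch : comm' x h = g := by
    have : x⁻¹ * (h⁻¹ * x * h) = x⁻¹ * (x * g) := by rw [hhx]
    simpa [comm', mul_assoc] using this
  -- T is the image of Cs under right multiplication by h
  have hTC : T = (fun c => c * h) '' Cs := by
    ext y
    simp only [hT, Set.mem_setOf_eq, Set.mem_image, hCs, cH, Set.mem_setOf_eq]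
    constructor
    · rintro ⟨hyH, hyc⟩
      refine ⟨y * h⁻¹, ⟨H.mul_mem hyH (H.inv_mem hhH), ?_⟩, by group⟩
      -- comm' x y = comm' x h means y⁻¹ x y = h⁻¹ x h
      have key : y⁻¹ * x * y = h⁻¹ * x * h := by
        have e : comm' x y = comm' x h := by rw [hyc, hch]
        have e2 : x⁻¹ * (y⁻¹ * x * y) = x⁻¹ * (h⁻¹ * x * h) := by
          simpa [comm', mul_assoc] using e
        exact mul_left_cancel e2
      have : y * h⁻¹ * x = y * (h⁻¹ * x * h) * h⁻¹ := by group
      rw [this, ← key]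
      group
    · rintro ⟨c, ⟨hcH, hcx⟩, rfl⟩
      refine ⟨H.mul_mem hcH hhH, ?_⟩
      have key : (c * h)⁻¹ * x * (c * h) = h⁻¹ * x * h := by
        have : c⁻¹ * x * c = x := by
          rw [mul_assoc, ← hcx, ← mul_assoc, inv_mul_cancel, one_mul]
        calc (c * h)⁻¹ * x * (c * h) = h⁻¹ * (c⁻¹ * x * c) * h := by group
        _ = h⁻¹ * x * h := by rw [this]
      have : comm' x (c * h) = comm' x h := by
        simp only [comm']
        calc x⁻¹ * (c*h)⁻¹ * x * (c*h) = x⁻¹ * ((c*h)⁻¹ * x * (c*h)) := by group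
        _ = x⁻¹ * (h⁻¹ * x * h) := by rw [key]
        _ = x⁻¹ * h⁻¹ * x * h := by group
      rw [this, hch]
  -- identify the degree with an ncard
  have hdeg : (gnc G H g).degree ⟨x, fun h => hxH h.1⟩
      = (((H : Set G) \ Zs) \ T).ncard := by
    rw [← SimpleGraph.card_neighborSet_eq_degree, ← Nat.card_eq_fintype_card,
      Nat.card_coe_set_eq,
      ← Set.ncard_image_of_injective _ (Subtype.val_injective)]
    congr 1
    ext z
    simp only [Set.mem_image, SimpleGraph.mem_neighborSet, gnc, Set.mem_diff,
      SetLike.mem_coe, hT, Set.mem_setOf_eq]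
    constructor
    · rintro ⟨⟨z', hz'⟩, ⟨hne, hor, h1, h2⟩, rfl⟩
      have hzH : z' ∈ H := by
        rcases hor with h' | h'
        · exact absurd h' hxH
        · exact h'
      exact ⟨⟨hzH, hz'⟩, fun hc => h1 hc.2⟩
    · rintro ⟨⟨hzH, hzZ⟩, hnT⟩
      have hcne : comm' x z ≠ g := fun hc => hnT ⟨hzH, hc⟩
      refine ⟨⟨z, hzZ⟩, ⟨?_, Or.inr hzH, hcne, ?_⟩, rfl⟩
      · intro he
        apply hxH
        have : x = z := congrArg Subtype.val he
        rw [this]; exact hzH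
      · rw [hginv]; exact hcne
  rw [hdeg]
  rw [Set.ncard_diff hTsub (Set.toFinite _), Set.ncard_diff hZsub (Set.toFinite _)]
  have e1 : Nat.card H = (H : Set G).ncard := Nat.card_coe_set_eq _
  have e2 : Nat.card Zs = Zs.ncard := Nat.card_coe_set_eq _
  have e3 : Nat.card Cs = Cs.ncard := Nat.card_coe_set_eq _
  rw [e1, e2, e3, hTC, Set.ncard_image_of_injective _ (mul_left_injective h)]
end

section
/- Let G be a finite non-abelian group, H a subgroup of G with H ≠ Z(H,G), and g ∈ K(H,G). If |H| ∉ {2, 3, 4, 6}, then the graph Δ_{H,G}^g is not a tree. -/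
open SimpleGraph

section tools
variable {G : Type*} [Group G]

lemma comm'_eq (x y : G) : comm' x y = (y * x)⁻¹ * (x * y) := by
  rw [comm']; group

lemma comm'_eq_one_iff (x y : G) : comm' x y = 1 ↔ y * x = x * y := by
  rw [comm'_eq, inv_mul_eq_one]

lemma comm'_mul_central (a u c : G) (hu : ∀ y : G, u * y = y * u) :
    comm' (a * u) c = comm' a c := by
  have h1 : c * (a * u) = (c * a) * u := by rw [mul_assoc]
  have h2 : (a * u) * c = (a * c) * u := by rw [mul_assoc, hu c, mul_assoc]
  rw [comm'_eq, h1, h2, comm'_eq]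
  rw [mul_inv_rev]
  have h3 : u * ((c*a)⁻¹ * (a*c)) = ((c*a)⁻¹ * (a*c)) * u := hu _
  calc u⁻¹ * (c*a)⁻¹ * ((a*c) * u) = u⁻¹ * (((c*a)⁻¹ * (a*c)) * u) := by group
    _ = u⁻¹ * (u * ((c*a)⁻¹ * (a*c))) := by rw [h3]
    _ = (c*a)⁻¹ * (a*c) := by group

lemma card_le_two_of_subset_pair {α : Type*} {s : Set α} {x y : α} (h : s ⊆ {x, y}) :
    s.ncard ≤ 2 := by
  refine le_trans (Set.ncard_le_ncard h (Set.toFinite _)) ?_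
  refine le_trans (Set.ncard_insert_le _ _) ?_
  simp

end tools

section treetools
variable {V : Type*} {Γ : SimpleGraph V}

lemma tree_no_triangle (hT : Γ.IsTree) {a b c : V} (hab : Γ.Adj a b) (hbc : Γ.Adj b c)
    (hac : Γ.Adj a c) : False := by
  have huniq := isAcyclic_iff_path_unique.mp hT.2
  have hp2 : (Walk.cons hab (Walk.cons hbc Walk.nil)).IsPath := by
    simp [Walk.cons_isPath_iff, hab.ne, hac.ne, hbc.ne]
  have := huniq (Path.singleton hac) ⟨_, hp2⟩
  have hlen := congrArg (fun p => p.1.length) this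
  simp [Path.singleton] at hlen

lemma tree_no_square (hT : Γ.IsTree) {w x y z : V} (hwx : Γ.Adj w x) (hxy : Γ.Adj x y)
    (hwz : Γ.Adj w z) (hzy : Γ.Adj z y) (hwy : w ≠ y) (hxz : x ≠ z) : False := by
  have huniq := isAcyclic_iff_path_unique.mp hT.2
  have hp1 : (Walk.cons hwx (Walk.cons hxy Walk.nil)).IsPath := by
    simp [Walk.cons_isPath_iff, hwx.ne, hwy, hxy.ne]
  have hp2 : (Walk.cons hwz (Walk.cons hzy Walk.nil)).IsPath := by
    simp [Walk.cons_isPath_iff, hwz.ne, hwy, hzy.ne]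
  have := huniq ⟨_, hp1⟩ ⟨_, hp2⟩
  have hsup := congrArg (fun p => p.1.support) this
  simp [Walk.support_cons] at hsup
  exact hxz hsup

lemma walk_closed {S : Set V} (hS : ∀ a b : V, Γ.Adj a b → a ∈ S → b ∈ S)
    {u v : V} (p : Γ.Walk u v) (hu : u ∈ S) : v ∈ S := by
  induction p with
  | nil => exact hu
  | cons h p ih => exact ih (hS _ _ h hu)

end treetools


/-- if `|H| ∉ {2, 3, 4, 6}` then `Δ_{H,G}^g` is not a tree. -/
theorem stmt6 {G : Type*} [Group G] [Fintype G]
    (hna : ∃ x y : G, x * y ≠ y * x)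
    (H : Subgroup G) (hH : (H : Set G) ≠ relCenter G H)
    (g : G) (hgK : g ∈ relComm G H)
    (h2 : Nat.card H ≠ 2) (h3 : Nat.card H ≠ 3)
    (h4 : Nat.card H ≠ 4) (h6 : Nat.card H ≠ 6) :
    ¬ (gnc G H g).IsTree := by
  intro hT
  classical
  have hZsubH : relCenter G H ⊆ (H : Set G) := fun x hx => hx.1
  have hZcent : ∀ x ∈ relCenter G H, ∀ y : G, x * y = y * x := fun x hx => hx.2
  have honeZ : (1:G) ∈ relCenter G H := ⟨H.one_mem, fun y => by rw [one_mul, mul_one]⟩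
  have hnotZ : ∀ {x y : G}, x * y ≠ y * x → x ∉ relCenter G H :=
    fun {x y} hxy hx => hxy (hZcent x hx y)
  have hexa : ∃ a, a ∈ H ∧ a ∉ relCenter G H := by
    by_contra hc
    push_neg at hc
    exact hH (Set.Subset.antisymm (fun x hx => hc x hx) hZsubH)
  -- adjacency maker
  have adj : ∀ {x y : G} (hx : x ∉ relCenter G H) (hy : y ∉ relCenter G H), x ≠ y →
      (x ∈ H ∨ y ∈ H) → comm' x y ≠ g → comm' x y ≠ g⁻¹ →
      (gnc G H g).Adj ⟨x, hx⟩ ⟨y, hy⟩ := by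
    intro x y hx hy hne hmem hc1 hc2
    exact ⟨fun h => hne (congrArg Subtype.val h), hmem, hc1, hc2⟩
  -- a * u for central u stays non-central
  have hmulZ : ∀ {a u : G}, a ∉ relCenter G H → a ∈ H → u ∈ relCenter G H →
      a * u ∉ relCenter G H := by
    intro a u ha haH hu hc
    refine ha ⟨haH, fun y => ?_⟩
    have h1 := hZcent _ hc y
    have h2 := hZcent _ hu y
    have h3 : (a*y)*u = (y*a)*u := by
      calc (a*y)*u = a*(y*u) := by rw [mul_assoc]
        _ = a*(u*y) := by rw [h2]
        _ = (a*u)*y := by rw [mul_assoc]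
        _ = y*(a*u) := h1
        _ = (y*a)*u := by rw [mul_assoc]
    exact mul_right_cancel h3
  by_cases hg1 : g = 1
  · -- CASE g = 1
    subst hg1
    have hadj1 : ∀ {x y : G} (hx : x ∉ relCenter G H) (hy : y ∉ relCenter G H),
        (x ∈ H ∨ y ∈ H) → y * x ≠ x * y → (gnc G H 1).Adj ⟨x, hx⟩ ⟨y, hy⟩ := by
      intro x y hx hy hmem hnc
      have hne : x ≠ y := by rintro rfl; exact hnc rfl
      have hc : comm' x y ≠ 1 := fun h => hnc ((comm'_eq_one_iff x y).mp h)
      exact adj hx hy hne hmem hc (by rw [inv_one]; exact hc)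
    by_cases hnc : ∃ a ∈ H, ∃ b ∈ H, a * b ≠ b * a
    · -- triangle a, b, a*b
      obtain ⟨a, haH, b, hbH, hab⟩ := hnc
      have haZ := hnotZ hab
      have hbZ : b ∉ relCenter G H := hnotZ (fun h => hab h.symm)
      have habH : a * b ∈ H := H.mul_mem haH hbH
      have habnc_a : (a*b)*a ≠ a*(a*b) := by
        intro h
        have h' : a*(a*b) = a*(b*a) := by rw [← h, mul_assoc]
        exact hab (mul_left_cancel h')
      have habnc_b : (a*b)*b ≠ b*(a*b) := by
        intro h
        have h' : (a*b)*b = (b*a)*b := by rw [h, mul_assoc]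
        exact hab (mul_right_cancel h')
      have habZ : a*b ∉ relCenter G H := hnotZ habnc_a
      refine tree_no_triangle hT (a := ⟨a, haZ⟩) (b := ⟨b, hbZ⟩) (c := ⟨a*b, habZ⟩) ?_ ?_ ?_
      · exact hadj1 haZ hbZ (Or.inl haH) (fun h => hab h.symm)
      · exact hadj1 hbZ habZ (Or.inl hbH) habnc_b
      · exact hadj1 haZ habZ (Or.inl haH) habnc_a
    · -- H relatively abelian : 4-cycle
      push_neg at hnc
      obtain ⟨a, haH, haZ⟩ := hexa
      have ha1 : a ≠ 1 := fun h => haZ (h ▸ honeZ)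
      have hpex : ∃ p, a * p ≠ p * a := by
        by_contra hc; push_neg at hc; exact haZ ⟨haH, hc⟩
      have ha' : ∃ a', a' ∈ H ∧ a' ∉ relCenter G H ∧ a' ≠ a := by
        by_cases hz : ∃ u ∈ relCenter G H, u ≠ (1:G)
        · obtain ⟨u, huZ, hu1⟩ := hz
          refine ⟨a*u, H.mul_mem haH (hZsubH huZ), hmulZ haZ haH huZ, ?_⟩
          intro h
          have h' : a * u = a * 1 := by rw [mul_one]; exact h
          exact hu1 (mul_left_cancel h')
        · push_neg at hz
          have hsub : ¬ ((H : Set G) ⊆ {1, a}) := by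
            intro hsub
            have hle : Nat.card H ≤ 2 := by
              have he : Nat.card H = ((H : Set G)).ncard := by
                rw [← Nat.card_coe_set_eq]; rfl
              rw [he]
              exact card_le_two_of_subset_pair hsub
            have hpos : 0 < Nat.card H := Nat.card_pos
            have h1' : Nat.card H = 1 := by omega
            have hbot : H = ⊥ := Subgroup.card_eq_one.mp h1'
            rw [hbot] at haH
            exact ha1 (Subgroup.mem_bot.mp haH)
          obtain ⟨x, hxH, hx⟩ := Set.not_subset.mp hsub
          simp only [Set.mem_insert_iff, Set.mem_singleton_iff, not_or] at hx
          refine ⟨x, hxH, ?_, hx.2⟩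
          intro hxZ
          exact hx.1 (hz x hxZ)
      obtain ⟨a', ha'H, ha'Z, ha'a⟩ := ha'
      obtain ⟨p, hp⟩ := hpex
      have hqex : ∃ q, a' * q ≠ q * a' := by
        by_contra hc; push_neg at hc; exact ha'Z ⟨ha'H, hc⟩
      obtain ⟨q, hq⟩ := hqex
      have hbex : ∃ b, a * b ≠ b * a ∧ a' * b ≠ b * a' := by
        by_cases h1 : a' * p = p * a'
        · by_cases h2' : a * q = q * a
          · refine ⟨p*q, ?_, ?_⟩
            · intro h
              have h3 : (a*p)*q = (p*a)*q := by
                calc (a*p)*q = a*(p*q) := by rw [mul_assoc]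
                  _ = (p*q)*a := h
                  _ = p*(q*a) := by rw [mul_assoc]
                  _ = p*(a*q) := by rw [h2']
                  _ = (p*a)*q := by rw [mul_assoc]
              exact hp (mul_right_cancel h3)
            · intro h
              have h3 : p*(a'*q) = p*(q*a') := by
                calc p*(a'*q) = (p*a')*q := by rw [mul_assoc]
                  _ = (a'*p)*q := by rw [h1]
                  _ = a'*(p*q) := by rw [mul_assoc]
                  _ = (p*q)*a' := h
                  _ = p*(q*a') := by rw [mul_assoc]
              exact hq (mul_left_cancel h3)
          · exact ⟨q, h2', hq⟩
        · exact ⟨p, hp, h1⟩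
      obtain ⟨b, hab, ha'b⟩ := hbex
      have hcomm_aa' : a * a' = a' * a := hnc a haH a' ha'H
      have hc1 : a*(a*b) ≠ (a*b)*a := by
        intro h
        have h' : a*(a*b) = a*(b*a) := by rw [h, mul_assoc]
        exact hab (mul_left_cancel h')
      have hc2 : a'*(a*b) ≠ (a*b)*a' := by
        intro h
        have h1 : a*(a'*b) = a*(b*a') := by
          calc a*(a'*b) = (a*a')*b := by rw [mul_assoc]
            _ = (a'*a)*b := by rw [hcomm_aa']
            _ = a'*(a*b) := by rw [mul_assoc]
            _ = (a*b)*a' := h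
            _ = a*(b*a') := by rw [mul_assoc]
        exact ha'b (mul_left_cancel h1)
      have hbZ : b ∉ relCenter G H := hnotZ (fun h => hab h.symm)
      have habZ : a*b ∉ relCenter G H := hnotZ (fun h => hc1 h.symm)
      have hab_b : a*b ≠ b := by
        intro h
        have h' : a*b = 1*b := by rw [one_mul]; exact h
        have ha1' : a = 1 := mul_right_cancel h'
        exact hab (by rw [ha1', one_mul, mul_one])
      refine tree_no_square hT (w := ⟨a, haZ⟩) (x := ⟨b, hbZ⟩) (y := ⟨a', ha'Z⟩)
        (z := ⟨a*b, habZ⟩) ?_ ?_ ?_ ?_ ?_ ?_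
      · exact hadj1 haZ hbZ (Or.inl haH) (fun h => hab h.symm)
      · exact hadj1 hbZ ha'Z (Or.inr ha'H) ha'b
      · exact hadj1 haZ habZ (Or.inl haH) (fun h => hc1 h.symm)
      · exact hadj1 habZ ha'Z (Or.inr ha'H) hc2
      · intro h
        exact ha'a (congrArg Subtype.val h).symm
      · intro h
        exact hab_b (congrArg Subtype.val h).symm

  · -- CASE g ≠ 1
    have hginv : (g⁻¹ : G) ≠ 1 := fun h => hg1 (by rwa [inv_eq_one] at h)
    have hcomm_ne : ∀ {x y : G}, y * x = x * y → comm' x y ≠ g ∧ comm' x y ≠ g⁻¹ := by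
      intro x y h
      rw [(comm'_eq_one_iff x y).mpr h]
      exact ⟨fun h' => hg1 h'.symm, fun h' => hginv h'.symm⟩
    -- no commuting triangle
    have F1 : ∀ a b c : G, a ∈ H → b ∈ H → a ∉ relCenter G H → b ∉ relCenter G H →
        c ∉ relCenter G H → a ≠ b → c ≠ a → c ≠ b →
        b * a = a * b → c * a = a * c → c * b = b * c → False := by
      intro a b c haH hbH haZ hbZ hcZ hab hca hcb hba hcomac hcb'
      refine tree_no_triangle hT (a := ⟨a, haZ⟩) (b := ⟨b, hbZ⟩) (c := ⟨c, hcZ⟩) ?_ ?_ ?_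
      · exact adj _ _ hab (Or.inl haH) (hcomm_ne hba).1 (hcomm_ne hba).2
      · exact adj _ _ (fun h => hcb h.symm) (Or.inl hbH) (hcomm_ne hcb').1 (hcomm_ne hcb').2
      · exact adj _ _ (fun h => hca h.symm) (Or.inl haH) (hcomm_ne hcomac).1 (hcomm_ne hcomac).2
    by_cases hz : ∃ u ∈ relCenter G H, u ≠ (1:G)
    · -- |Z| ≥ 2 : component {a, a*u}
      obtain ⟨u, huZ, hu1⟩ := hz
      obtain ⟨a, haH, haZ⟩ := hexa
      have huH : u ∈ H := hZsubH huZ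
      have hucent : ∀ y : G, u * y = y * u := hZcent u huZ
      have hauH : a * u ∈ H := H.mul_mem haH huH
      have hauZ : a * u ∉ relCenter G H := hmulZ haZ haH huZ
      have hau_ne : a * u ≠ a := by
        intro h
        have h' : a * u = a * 1 := by rw [mul_one]; exact h
        exact hu1 (mul_left_cancel h')
      have hcomm_au : (a * u) * a = a * (a * u) := by
        rw [mul_assoc, ← hucent a, ← mul_assoc]
      -- the closed set
      set S : Set ((relCenter G H)ᶜ : Set G) := {v | (v : G) = a ∨ (v : G) = a * u} with hS
      have hclosed : ∀ v w : ((relCenter G H)ᶜ : Set G), (gnc G H g).Adj v w → v ∈ S → w ∈ S := by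
        intro v w hadj hv
        obtain ⟨hne, hmem, hc1, hc2⟩ := hadj
        rcases hv with hv | hv
        · -- v = a
          by_contra hw
          rw [hS, Set.mem_setOf_eq] at hw
          push_neg at hw
          obtain ⟨hw1, hw2⟩ := hw
          have hwa : (w : G) ≠ a := hw1
          -- triangle a, a*u, w
          refine tree_no_triangle hT (a := ⟨a, haZ⟩) (b := ⟨(w : G), w.2⟩) (c := ⟨a*u, hauZ⟩) ?_ ?_ ?_
          · refine adj _ _ (fun h => hwa h.symm) (Or.inl haH) ?_ ?_
            · rw [← hv]; exact hc1
            · rw [← hv]; exact hc2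
          · refine adj _ _ (fun h => hw2 h) (Or.inr hauH) ?_ ?_
            · rw [comm'_swap, ne_eq, inv_eq_iff_eq_inv]
              rw [comm'_mul_central a u (w : G) hucent, ← hv]
              intro h
              exact hc2 (by rw [h])
            · rw [comm'_swap, ne_eq, inv_eq_iff_eq_inv, inv_inv]
              rw [comm'_mul_central a u (w : G) hucent, ← hv]
              exact hc1
          · refine adj _ _ (fun h => hau_ne h.symm) (Or.inl haH) ?_ ?_
            · exact (hcomm_ne hcomm_au).1
            · exact (hcomm_ne hcomm_au).2
        · -- v = a*u
          by_contra hw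
          rw [hS, Set.mem_setOf_eq] at hw
          push_neg at hw
          obtain ⟨hw1, hw2⟩ := hw
          -- triangle a*u, w, a
          refine tree_no_triangle hT (a := ⟨a*u, hauZ⟩) (b := ⟨(w : G), w.2⟩) (c := ⟨a, haZ⟩) ?_ ?_ ?_
          · refine adj _ _ (fun h => hw2 h.symm) (Or.inl hauH) ?_ ?_
            · rw [← hv]; exact hc1
            · rw [← hv]; exact hc2
          · refine adj _ _ (fun h => hw1 h) (Or.inr haH) ?_ ?_
            · rw [comm'_swap, ne_eq, inv_eq_iff_eq_inv]
              intro h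
              apply hc2
              rw [hv, comm'_mul_central a u (w : G) hucent, h]
            · rw [comm'_swap, ne_eq, inv_eq_iff_eq_inv, inv_inv]
              intro h
              apply hc1
              rw [hv, comm'_mul_central a u (w : G) hucent, h]
          · refine adj _ _ hau_ne (Or.inl hauH) ?_ ?_
            · rw [comm'_swap, ne_eq, inv_eq_iff_eq_inv]
              intro h
              exact (hcomm_ne hcomm_au).2 (by rw [h])
            · rw [comm'_swap, ne_eq, inv_eq_iff_eq_inv, inv_inv]
              exact (hcomm_ne hcomm_au).1
      -- a third vertex
      obtain ⟨p, q, hpq⟩ := hna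
      have hb : ∃ b : G, b ∉ relCenter G H ∧ b ≠ a ∧ b ≠ a * u := by
        have hcomm_pair : ∀ x y : G, (x = a ∨ x = a*u) → (y = a ∨ y = a*u) → x * y = y * x := by
          rintro x y (rfl | rfl) (rfl | rfl)
          · rfl
          · exact hcomm_au.symm
          · exact hcomm_au
          · rfl
        by_cases hp : p = a ∨ p = a * u
        · by_cases hq : q = a ∨ q = a * u
          · exact absurd (hcomm_pair p q hp hq) hpq
          · push_neg at hq
            refine ⟨q, ?_, hq.1, hq.2⟩
            intro hqZ
            exact hpq (hZcent q hqZ p).symm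
        · push_neg at hp
          exact ⟨p, hnotZ hpq, hp.1, hp.2⟩
      obtain ⟨b, hbZ, hba, hbau⟩ := hb
      have hreach := hT.1.preconnected ⟨a, haZ⟩ ⟨b, hbZ⟩
      obtain ⟨pth⟩ := hreach
      have := walk_closed hclosed pth (Or.inl rfl)
      rcases this with h | h
      · exact hba h
      · exact hbau h

    · -- Z = {1}
      push_neg at hz
      have hZ1 : ∀ x : G, x ∉ relCenter G H ↔ x ≠ 1 := by
        intro x
        constructor
        · intro hx h; exact hx (h ▸ honeZ)
        · intro hx hxZ; exact hx (hz x hxZ)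
      have ord23 : ∀ x, x ∈ H → x ≠ 1 → x*x = 1 ∨ (x*x*x = 1 ∧ x*x ≠ 1) := by
        intro x hxH hx1
        by_cases hx2 : x*x = 1
        · exact Or.inl hx2
        · right
          refine ⟨?_, hx2⟩
          by_contra hx3
          have hxinvne : x ≠ x⁻¹ := by
            intro h
            apply hx2
            calc x*x = x*x⁻¹ := by rw [← h]
              _ = 1 := by group
          have hxx_ne_inv : x*x ≠ x⁻¹ := by
            intro h
            apply hx3
            calc x*x*x = x⁻¹*x := by rw [h]
              _ = 1 := by group
          refine F1 x x⁻¹ (x*x) hxH (H.inv_mem hxH) ((hZ1 x).mpr hx1)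
            ((hZ1 _).mpr (fun h => hx1 (by rwa [inv_eq_one] at h)))
            ((hZ1 _).mpr hx2) hxinvne ?_ hxx_ne_inv (by group) (by group) (by group)
          intro h
          apply hx1
          have h' : x*x = x*1 := by rw [mul_one]; exact h
          exact mul_left_cancel h'
      by_cases hord3 : ∃ a, a ∈ H ∧ a*a*a = 1 ∧ a*a ≠ 1
      · -- an element of order 3 exists
        obtain ⟨a, haH, h3a, h2a⟩ := hord3
        have ha1 : a ≠ 1 := fun h => h2a (by rw [h, one_mul])
        have haZ : a ∉ relCenter G H := (hZ1 a).mpr ha1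
        have ha2H : a*a ∈ H := H.mul_mem haH haH
        have ha2Z : a*a ∉ relCenter G H := (hZ1 _).mpr h2a
        have ha2a : a*a ≠ a := by
          intro h
          apply ha1
          have h' : a*a = a*1 := by rw [mul_one]; exact h
          exact mul_left_cancel h'
        have hCG : ∀ c : G, a*c = c*a → c = 1 ∨ c = a ∨ c = a*a := by
          intro c hc
          by_contra hcon
          push_neg at hcon
          obtain ⟨hc1, hc2, hc3⟩ := hcon
          have hcc2 : c*(a*a) = (a*a)*c := by
            calc c*(a*a) = (c*a)*a := by rw [mul_assoc]
              _ = (a*c)*a := by rw [← hc]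
              _ = a*(c*a) := by rw [mul_assoc]
              _ = a*(a*c) := by rw [← hc]
              _ = (a*a)*c := by rw [mul_assoc]
          exact F1 a (a*a) c haH ha2H haZ ha2Z ((hZ1 c).mpr hc1)
            (fun h => ha2a h.symm) hc2 hc3 (by group) hc.symm hcc2
        have hcover : ∀ c : G, c ≠ 1 → c ≠ a → c ≠ a*a →
            (comm' a c = g ∨ comm' a c = g⁻¹) ∨
            (comm' (a*a) c = g ∨ comm' (a*a) c = g⁻¹) := by
          intro c h1 h2' h3'
          by_contra hcon
          push_neg at hcon
          obtain ⟨⟨hc1, hc2⟩, hc3, hc4⟩ := hcon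
          refine tree_no_triangle hT (a := ⟨a, haZ⟩) (b := ⟨a*a, ha2Z⟩)
            (c := ⟨c, (hZ1 c).mpr h1⟩) ?_ ?_ ?_
          · exact adj _ _ (fun h => ha2a h.symm) (Or.inl haH)
              (hcomm_ne (by group)).1 (hcomm_ne (by group)).2
          · exact adj _ _ (fun h => h3' h.symm) (Or.inl ha2H) hc3 hc4
          · exact adj _ _ (fun h => h2' h.symm) (Or.inl haH) hc1 hc2
        -- cardinality bound |G| ≤ 15
        have hCcard : ({1, a, a*a} : Set G).ncard ≤ 3 := by
          refine le_trans (Set.ncard_insert_le _ _) ?_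
          have := card_le_two_of_subset_pair (s := ({a, a*a} : Set G)) (x := a) (y := a*a)
            subset_rfl
          omega
        have hbad : ∀ t w : G, (∀ c : G, t*c = c*t → c = 1 ∨ c = a ∨ c = a*a) →
            {c : G | comm' t c = w}.ncard ≤ 3 := by
          intro t w hC
          rcases Set.eq_empty_or_nonempty {c : G | comm' t c = w} with he | ⟨c₀, hc₀⟩
          · rw [he]; simp
          · have hsub : {c : G | comm' t c = w} ⊆ (fun v => v * c₀) '' ({1, a, a*a} : Set G) := by
              intro c hc
              have h : comm' t c = comm' t c₀ := hc.trans hc₀.symm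
              simp only [comm'] at h
              simp only [mul_assoc] at h
              have h' := mul_left_cancel h
              have h'' := congrArg (fun v => c * v * c₀⁻¹) h'
              simp only [mul_assoc, mul_inv_cancel_left, mul_inv_cancel, mul_one] at h''
              have hkey : t * (c * c₀⁻¹) = (c * c₀⁻¹) * t := by
                simpa [mul_assoc] using h''
              have hmem : c * c₀⁻¹ ∈ ({1, a, a*a} : Set G) := by
                rcases hC _ hkey with h | h | h <;> simp [h]
              exact ⟨c * c₀⁻¹, hmem, by simp [mul_assoc]⟩
            refine le_trans (Set.ncard_le_ncard hsub (Set.toFinite _)) ?_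
            exact le_trans (Set.ncard_image_le (Set.toFinite _)) hCcard
        have hcoverset : (Set.univ : Set G) ⊆ (({1, a, a*a} : Set G) ∪
            ({c : G | comm' a c = g} ∪ {c : G | comm' a c = g⁻¹})) ∪
            ({c : G | comm' (a*a) c = g} ∪ {c : G | comm' (a*a) c = g⁻¹}) := by
          intro c _
          by_cases h1 : c = 1
          · exact Or.inl (Or.inl (by simp [h1]))
          by_cases h2' : c = a
          · exact Or.inl (Or.inl (by simp [h2']))
          by_cases h3' : c = a*a
          · exact Or.inl (Or.inl (by simp [h3']))
          rcases hcover c h1 h2' h3' with (h | h) | (h | h)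
          · exact Or.inl (Or.inr (Or.inl h))
          · exact Or.inl (Or.inr (Or.inr h))
          · exact Or.inr (Or.inl h)
          · exact Or.inr (Or.inr h)
        have hcard15 : Nat.card G ≤ 15 := by
          have e1 : Nat.card G = (Set.univ : Set G).ncard := (Set.ncard_univ G).symm
          rw [e1]
          refine le_trans (Set.ncard_le_ncard hcoverset (Set.toFinite _)) ?_
          have u1 := Set.ncard_union_le (({1, a, a*a} : Set G) ∪
            ({c : G | comm' a c = g} ∪ {c : G | comm' a c = g⁻¹}))
            (({c : G | comm' (a*a) c = g} ∪ {c : G | comm' (a*a) c = g⁻¹}))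
          have u2 := Set.ncard_union_le ({1, a, a*a} : Set G)
            ({c : G | comm' a c = g} ∪ {c : G | comm' a c = g⁻¹})
          have u3 := Set.ncard_union_le {c : G | comm' a c = g} {c : G | comm' a c = g⁻¹}
          have u4 := Set.ncard_union_le {c : G | comm' (a*a) c = g} {c : G | comm' (a*a) c = g⁻¹}
          have b1 := hbad a g hCG
          have b2 := hbad a g⁻¹ hCG
          have hCG2 : ∀ c : G, (a*a)*c = c*(a*a) → c = 1 ∨ c = a ∨ c = a*a := by
            intro c hc
            apply hCG
            -- c commutes with a*a implies with a = (a*a)*(a*a)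
            have h4 : a = (a*a)*(a*a) := by
              have : (a*a)*(a*a) = (a*a*a)*a := by group
              rw [this, h3a, one_mul]
            rw [h4]
            calc ((a*a)*(a*a))*c = (a*a)*((a*a)*c) := by rw [mul_assoc]
              _ = (a*a)*(c*(a*a)) := by rw [hc]
              _ = ((a*a)*c)*(a*a) := by rw [← mul_assoc]
              _ = (c*(a*a))*(a*a) := by rw [hc]
              _ = c*((a*a)*(a*a)) := by rw [mul_assoc]
          have b3 := hbad (a*a) g hCG2
          have b4 := hbad (a*a) g⁻¹ hCG2
          omega
        -- order of a in H is 3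
        haveI : Fact (Nat.Prime 3) := ⟨by norm_num⟩
        have hpow3 : (⟨a, haH⟩ : H)^3 = 1 := by
          apply Subtype.ext
          rw [SubmonoidClass.coe_pow, OneMemClass.coe_one]
          show a^3 = 1
          rw [pow_succ, pow_two]
          exact h3a
        have haH3 : orderOf (⟨a, haH⟩ : H) = 3 :=
          orderOf_eq_prime hpow3 (fun h => ha1 (congrArg Subtype.val h))
        have h3dvd : (3:ℕ) ∣ Nat.card H := haH3 ▸ orderOf_dvd_natCard _
        have hHdvd : Nat.card H ∣ Nat.card G := Subgroup.card_subgroup_dvd_card H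
        have hGpos : 0 < Nat.card G := Nat.card_pos
        have hHpos : 0 < Nat.card H := Nat.card_pos
        have hHle : Nat.card H ≤ Nat.card G := Nat.le_of_dvd hGpos hHdvd
        have hn : Nat.card H = 9 ∨ Nat.card H = 12 ∨ Nat.card H = 15 := by omega
        have hNG : Nat.card G = Nat.card H := by
          obtain ⟨k, hk⟩ := hHdvd
          rcases hn with h | h | h <;> rw [h] at hk ⊢ <;> omega
        have hHtop : H = ⊤ := Subgroup.eq_top_of_card_eq H hNG.symm
        have hallH : ∀ x : G, x ∈ H := fun x => hHtop ▸ Subgroup.mem_top x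
        have hord : ∀ x : G, x ≠ 1 → x*x = 1 ∨ x*x*x = 1 :=
          fun x hx => (ord23 x (hallH x) hx).imp id And.left
        rcases hn with h9 | h12 | h15
        · -- |G| = 9 : 3-group has nontrivial center
          have hN9 : Nat.card G = 9 := by omega
          have hpg : IsPGroup 3 G := IsPGroup.of_card (by rw [hN9]; norm_num : Nat.card G = 3^2)
          haveI : Nontrivial G := ⟨⟨a, 1, ha1⟩⟩
          have hcn : Nontrivial (Subgroup.center G) := hpg.center_nontrivial
          obtain ⟨x, hx1⟩ := exists_ne (1 : Subgroup.center G)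
          have hxc : ∀ y : G, (x:G) * y = y * (x:G) :=
            fun y => (Subgroup.mem_center_iff.mp x.2 y).symm
          have hxZ : (x : G) ∈ relCenter G H := ⟨hallH _, hxc⟩
          exact hx1 (Subtype.ext (hz _ hxZ))
        · -- |G| = 12 : Sylow 2-subgroup of order 4
          haveI : Fact (Nat.Prime 2) := ⟨by norm_num⟩
          have hN12 : Nat.card G = 12 := by omega
          obtain ⟨K, hK⟩ := Sylow.exists_subgroup_card_pow_prime 2 (n := 2)
            (by rw [hN12]; norm_num : (2:ℕ)^2 ∣ Nat.card G)
          have hK4 : ∀ x : G, x ∈ K → x*x*x*x = 1 := by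
            intro x hx
            have h := pow_card_eq_one' (x := (⟨x, hx⟩ : K))
            rw [hK] at h
            have h' := congrArg Subtype.val h
            rw [SubmonoidClass.coe_pow] at h'
            have h'' : x ^ 4 = 1 := by
              have e4 : ((2:ℕ)^2) = 4 := by norm_num
              rw [e4] at h'
              simpa using h'
            calc x*x*x*x = x^4 := by rw [pow_succ, pow_succ, pow_two]
              _ = 1 := h''
          have hKinv : ∀ x : G, x ∈ K → x*x = 1 := by
            intro x hx
            by_cases hx1 : x = 1
            · rw [hx1, one_mul]
            rcases hord x hx1 with h | h
            · exact h
            · exfalso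
              apply hx1
              have h4 := hK4 x hx
              have : (x*x*x)*x = 1 := h4
              rw [h] at this
              rwa [one_mul] at this
          have hKcard : Nat.card K = ((K : Set G)).ncard := by
            rw [← Nat.card_coe_set_eq]; rfl
          have hKne : ∃ x, x ∈ K ∧ x ≠ (1:G) := by
            by_contra hcon
            push_neg at hcon
            have hsub : (K : Set G) ⊆ {1, 1} := by
              intro x hx; simp [hcon x hx]
            have hle := card_le_two_of_subset_pair hsub
            rw [← hKcard, hK] at hle
            norm_num at hle
          obtain ⟨x, hxK, hx1⟩ := hKne
          have hKy : ∃ y, y ∈ K ∧ y ≠ 1 ∧ y ≠ x := by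
            by_contra hcon
            push_neg at hcon
            have hsub : (K : Set G) ⊆ {1, x} := by
              intro y hy
              by_cases hy1 : y = 1
              · simp [hy1]
              · simp [hcon y hy hy1]
            have hle := card_le_two_of_subset_pair hsub
            rw [← hKcard, hK] at hle
            norm_num at hle
          obtain ⟨y, hyK, hy1, hyx⟩ := hKy
          have hx2 := hKinv x hxK
          have hy2 := hKinv y hyK
          have hxy2 := hKinv (x*y) (K.mul_mem hxK hyK)
          have hxy1 : x*y ≠ 1 := by
            intro h
            apply hyx
            have h1 : x*y = x*x := by rw [h, hx2]
            exact mul_left_cancel h1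
          have hcomm_xy : y*x = x*y := by
            have hxinv : x⁻¹ = x := inv_eq_of_mul_eq_one_right hx2
            have hyinv : y⁻¹ = y := inv_eq_of_mul_eq_one_right hy2
            calc y*x = y⁻¹*x⁻¹ := by rw [hxinv, hyinv]
              _ = (x*y)⁻¹ := (mul_inv_rev x y).symm
              _ = x*y := inv_eq_of_mul_eq_one_right hxy2
          refine F1 x y (x*y) (hallH x) (hallH y) ((hZ1 x).mpr hx1) ((hZ1 y).mpr hy1)
            ((hZ1 _).mpr hxy1) (fun h => hyx h.symm) ?_ ?_ hcomm_xy ?_ ?_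
          · intro h
            apply hy1
            have h' : x*y = x*1 := by rw [mul_one]; exact h
            exact mul_left_cancel h'
          · intro h
            apply hx1
            have h' : x*y = 1*y := by rw [one_mul]; exact h
            exact mul_right_cancel h'
          · calc (x*y)*x = x*(y*x) := by rw [mul_assoc]
              _ = x*(x*y) := by rw [hcomm_xy]
          · calc (x*y)*y = (y*x)*y := by rw [hcomm_xy]
              _ = y*(x*y) := by rw [mul_assoc]
        · -- |G| = 15 : Cauchy gives an element of order 5
          haveI : Fact (Nat.Prime 5) := ⟨by norm_num⟩
          have hN15 : Nat.card G = 15 := by omega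
          have hNf : Fintype.card G = 15 := by rw [← Nat.card_eq_fintype_card]; exact hN15
          obtain ⟨x, hx5⟩ := exists_prime_orderOf_dvd_card 5 (by rw [hNf]; norm_num)
          have hx1 : x ≠ 1 := by
            intro h
            rw [h, orderOf_one] at hx5
            norm_num at hx5
          rcases hord x hx1 with h | h
          · have hp2 : x^2 = 1 := by rw [pow_two]; exact h
            have hdvd := orderOf_dvd_of_pow_eq_one hp2
            rw [hx5] at hdvd
            norm_num at hdvd
          · have hp3 : x^3 = 1 := by rw [pow_succ, pow_two]; exact h
            have hdvd := orderOf_dvd_of_pow_eq_one hp3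
            rw [hx5] at hdvd
            norm_num at hdvd
      · -- every nontrivial element of H is an involution
        push_neg at hord3
        have hinv : ∀ x, x ∈ H → x ≠ 1 → x*x = 1 := by
          intro x hxH hx1
          rcases ord23 x hxH hx1 with h | ⟨h3', h2'⟩
          · exact h
          · exact absurd h2' (fun hh => hh (hord3 x hxH h3'))
        obtain ⟨a, haH, haZ⟩ := hexa
        have ha1 : a ≠ 1 := (hZ1 a).mp haZ
        have hsub : ¬ ((H : Set G) ⊆ {1, a}) := by
          intro hsub
          have hle : Nat.card H ≤ 2 := by
            have he : Nat.card H = ((H : Set G)).ncard := by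
              rw [← Nat.card_coe_set_eq]; rfl
            rw [he]
            exact card_le_two_of_subset_pair hsub
          have hpos : 0 < Nat.card H := Nat.card_pos
          have h1' : Nat.card H = 1 := by omega
          have hbot : H = ⊥ := Subgroup.card_eq_one.mp h1'
          rw [hbot] at haH
          exact ha1 (Subgroup.mem_bot.mp haH)
        obtain ⟨y, hyH, hy⟩ := Set.not_subset.mp hsub
        simp only [Set.mem_insert_iff, Set.mem_singleton_iff, not_or] at hy
        obtain ⟨hy1, hya⟩ := hy
        have ha2 := hinv a haH ha1
        have hy2 := hinv y hyH hy1
        have hay1 : a*y ≠ 1 := by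
          intro h
          apply hya
          have h1 : a*y = a*a := by rw [h, ha2]
          exact mul_left_cancel h1
        have hay2 := hinv (a*y) (H.mul_mem haH hyH) hay1
        have hcomm_ay : y*a = a*y := by
          have hainv : a⁻¹ = a := inv_eq_of_mul_eq_one_right ha2
          have hyinv : y⁻¹ = y := inv_eq_of_mul_eq_one_right hy2
          calc y*a = y⁻¹*a⁻¹ := by rw [hainv, hyinv]
            _ = (a*y)⁻¹ := (mul_inv_rev a y).symm
            _ = a*y := inv_eq_of_mul_eq_one_right hay2
        refine F1 a y (a*y) haH hyH haZ ((hZ1 y).mpr hy1) ((hZ1 _).mpr hay1)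
          (fun h => hya h.symm) ?_ ?_ hcomm_ay ?_ ?_
        · intro h
          apply hy1
          have h' : a*y = a*1 := by rw [mul_one]; exact h
          exact mul_left_cancel h'
        · intro h
          apply ha1
          have h' : a*y = 1*y := by rw [one_mul]; exact h
          exact mul_right_cancel h'
        · calc (a*y)*a = a*(y*a) := by rw [mul_assoc]
            _ = a*(a*y) := by rw [hcomm_ay]
        · calc (a*y)*y = (y*a)*y := by rw [hcomm_ay]
            _ = y*(a*y) := by rw [mul_assoc]
end

section
/- Let G be a finite non-abelian group, H a subgroup of G, and g ∈ K(H,G) with g ∈ H, g ∉ Z(G) (the center of G), and g² = 1. Then the graph Δ_{H,G}^g is connected and its diameter equals 2. -/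
open SimpleGraph

/-- if `g ∈ K(H,G)`, `g ∈ H`, `g` is non-central in `G` and `g² = 1`,
then `Δ_{H,G}^g` is connected with diameter `2`. -/
theorem stmt9 {G : Type*} [Group G] [Fintype G]
    (hna : ∃ x y : G, x * y ≠ y * x)
    (H : Subgroup G) (g : G) (hgK : g ∈ relComm G H)
    (hgH : g ∈ H) (hgZ : g ∉ Subgroup.center G) (hg2 : g ^ 2 = 1) :
    (gnc G H g).Connected ∧ (gnc G H g).diam = 2 := by
  have hg1 : g ≠ 1 := by
    rintro rfl; exact hgZ (Subgroup.one_mem _)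
  have hginv : g⁻¹ = g := by
    rw [pow_two] at hg2
    exact inv_eq_of_mul_eq_one_left hg2
  -- g is a vertex
  have gv : g ∈ (relCenter G H)ᶜ := by
    intro hg
    exact hgZ (Subgroup.mem_center_iff.mpr fun y => (hg.2 y).symm)
  set gV : ((relCenter G H)ᶜ : Set G) := ⟨g, gv⟩ with hgV
  -- no element has commutator g with g
  have key : ∀ x : G, comm' x g ≠ g := by
    intro x hx
    apply hg1
    have : x⁻¹ * g⁻¹ * x * g = g := hx
    have h2 : g⁻¹ * x * g = x * g := by
      have := congrArg (x * ·) this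
      simpa [mul_assoc] using this
    have h3 : g⁻¹ * x = x := by
      have := congrArg (· * g⁻¹) h2
      simpa [mul_assoc] using this
    have : g⁻¹ = 1 := by
      have := congrArg (· * x⁻¹) h3
      simpa [mul_assoc] using this
    simpa using this
  have key2 : ∀ x : G, comm' g x ≠ g := by
    intro x hx
    apply key x
    rw [comm'_swap, hx, hginv]
  -- every vertex distinct from g is adjacent to g
  have adjg : ∀ x : ((relCenter G H)ᶜ : Set G), x ≠ gV → (gnc G H g).Adj x gV := by
    intro x hx
    exact ⟨hx, Or.inr hgH, key x, by rw [hginv]; exact key x⟩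
  -- connectedness
  have hreach : ∀ x y : ((relCenter G H)ᶜ : Set G), (gnc G H g).Reachable x y := by
    intro x y
    by_cases hx : x = gV
    · by_cases hy : y = gV
      · rw [hx, hy]
      · rw [hx]; exact (adjg y hy).symm.reachable
    · by_cases hy : y = gV
      · rw [hy]; exact (adjg x hx).reachable
      · exact ((adjg x hx).reachable).trans (adjg y hy).symm.reachable
  haveI : Nonempty ((relCenter G H)ᶜ : Set G) := ⟨gV⟩
  have hconn : (gnc G H g).Connected := ⟨hreach⟩
  refine ⟨hconn, ?_⟩
  -- edist ≤ 2 everywhere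
  have hle : ∀ x y : ((relCenter G H)ᶜ : Set G), (gnc G H g).edist x y ≤ 2 := by
    intro x y
    by_cases hxy : x = y
    · rw [hxy, SimpleGraph.edist_self]; exact zero_le
    by_cases hx : x = gV
    · rw [hx, SimpleGraph.edist_comm]
      have hy' : y ≠ gV := fun h => hxy (hx.trans h.symm)
      exact le_trans (le_of_eq ((SimpleGraph.edist_eq_one_iff_adj).mpr (adjg y hy')))
        one_le_two
    by_cases hy : y = gV
    · rw [hy]
      exact le_trans (le_of_eq ((SimpleGraph.edist_eq_one_iff_adj).mpr (adjg x hx)))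
        one_le_two
    · calc (gnc G H g).edist x y ≤ (gnc G H g).edist x gV + (gnc G H g).edist gV y :=
            SimpleGraph.edist_triangle
        _ ≤ 1 + 1 := by
            refine add_le_add ?_ ?_
            · exact le_of_eq ((SimpleGraph.edist_eq_one_iff_adj).mpr (adjg x hx))
            · rw [SimpleGraph.edist_comm]
              exact le_of_eq ((SimpleGraph.edist_eq_one_iff_adj).mpr (adjg y hy))
        _ = 2 := by norm_num
  -- the witnessing pair a, b with [a,b] = g
  obtain ⟨a, haH, b, hab⟩ := hgK
  have hab1 : a ≠ b := by
    rintro rfl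
    apply hg1
    rw [← hab]
    simp [comm']
  have av : a ∈ (relCenter G H)ᶜ := by
    intro ha
    apply hg1
    rw [← hab]
    simp [comm', ← mul_assoc]
    have := (ha.2 b).symm
    calc a⁻¹ * b⁻¹ * a * b = a⁻¹ * b⁻¹ * (a * b) := by rw [mul_assoc]
      _ = a⁻¹ * b⁻¹ * (b * a) := by rw [ha.2 b]
      _ = 1 := by group
  have bv : b ∈ (relCenter G H)ᶜ := by
    intro hb
    apply hg1
    rw [← hab]
    calc a⁻¹ * b⁻¹ * a * b = a⁻¹ * b⁻¹ * (a * b) := by rw [mul_assoc]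
      _ = a⁻¹ * b⁻¹ * (b * a) := by rw [← hb.2 a]
      _ = 1 := by group
  set aV : ((relCenter G H)ᶜ : Set G) := ⟨a, av⟩
  set bV : ((relCenter G H)ᶜ : Set G) := ⟨b, bv⟩
  have hnadj : ¬ (gnc G H g).Adj aV bV := by
    rintro ⟨-, -, h1, -⟩
    exact h1 hab
  have habV : aV ≠ bV := fun h => hab1 (congrArg Subtype.val h)
  have hge : (gnc G H g).edist aV bV = 2 := by
    have h1 : (gnc G H g).edist aV bV ≠ 0 :=
      fun h => habV (SimpleGraph.edist_eq_zero_iff.mp h)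
    have h2 : (gnc G H g).edist aV bV ≠ 1 :=
      fun h => hnadj (SimpleGraph.edist_eq_one_iff_adj.mp h)
    have h3 := hle aV bV
    have htop : (gnc G H g).edist aV bV ≠ ⊤ := fun h => by
      rw [h] at h3; exact absurd h3 (by decide)
    lift (gnc G H g).edist aV bV to ℕ using htop with n hn
    have h1' : n ≠ 0 := by exact_mod_cast h1
    have h2' : n ≠ 1 := by exact_mod_cast h2
    have h3' : n ≤ 2 := by exact_mod_cast h3
    have : n = 2 := by omega
    exact_mod_cast this
  have hediam : (gnc G H g).ediam = 2 := by
    refine le_antisymm (SimpleGraph.ediam_le_of_edist_le hle) ?_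
    rw [← hge]
    exact SimpleGraph.edist_le_ediam
  rw [SimpleGraph.diam, hediam]
  rfl
end

section
/- Let G be a finite non-abelian group, H a subgroup of G, and g ∈ H \ Z(H,G) with g³ ≠ 1 (i.e., the order of g is not 3). Then the graph Δ_{H,G}^g is connected and any two of its vertices are at distance at most 3; in particular its diameter is at most 3. -/
open SimpleGraph

private lemma conj_eq_one' {G : Type*} [Group G] {x y : G} (h : x⁻¹ * y * x = 1) : y = 1 := by
  have := congrArg (fun t => x * t * x⁻¹) h
  simpa [mul_assoc] using this

/-- if `g ∈ H \ Z(H,G)` and `g³ ≠ 1` then `Δ_{H,G}^g` is connected,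
any two vertices are at distance at most `3`, and its diameter is at most `3`. -/
theorem stmt11 {G : Type*} [Group G] [Fintype G]
    (hna : ∃ x y : G, x * y ≠ y * x)
    (H : Subgroup G) (g : G) (hgH : g ∈ H) (hgZ : g ∉ relCenter G H)
    (hg3 : g ^ 3 ≠ 1) :
    (gnc G H g).Connected ∧
    (∀ u v : ((relCenter G H)ᶜ : Set G), (gnc G H g).dist u v ≤ 3) ∧
    (gnc G H g).diam ≤ 3 := by
  classical
  have hg1 : g ≠ 1 := by
    rintro rfl
    exact hgZ ⟨H.one_mem, fun y => by simp⟩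
  set Γ := gnc G H g with hΓdef
  set gv : ((relCenter G H)ᶜ : Set G) := ⟨g, hgZ⟩ with hgvdef
  -- the commutator [x, g] is never g
  have hcomm_g : ∀ x : G, comm' x g ≠ g := by
    intro x h
    apply hg1
    rw [comm'] at h
    have h1 : x⁻¹ * g⁻¹ * x = 1 := by
      calc x⁻¹ * g⁻¹ * x = (x⁻¹ * g⁻¹ * x * g) * g⁻¹ := by group
      _ = g * g⁻¹ := by rw [h]
      _ = 1 := by group
    have := conj_eq_one' h1
    rwa [inv_eq_one] at this
  -- the "bad" condition
  have hbad : ∀ x : G, comm' x g = g⁻¹ → x⁻¹ * g⁻¹ * x = g⁻¹ * g⁻¹ := by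
    intro x h
    rw [comm'] at h
    calc x⁻¹ * g⁻¹ * x = (x⁻¹ * g⁻¹ * x * g) * g⁻¹ := by group
    _ = g⁻¹ * g⁻¹ := by rw [h]
  have hbad2 : ∀ x : G, comm' x g = g⁻¹ → comm' x (g*g) = g⁻¹ * g⁻¹ := by
    intro x h
    have hc := hbad x h
    calc comm' x (g*g) = (x⁻¹ * g⁻¹ * x) * (x⁻¹ * g⁻¹ * x) * (g*g) := by rw [comm']; group
    _ = (g⁻¹*g⁻¹) * (g⁻¹*g⁻¹) * (g*g) := by rw [hc]
    _ = g⁻¹ * g⁻¹ := by group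
  have hg2ne_g : g⁻¹ * g⁻¹ ≠ g := by
    intro h
    apply hg3
    have h1 : (1:G) = g*g*(g⁻¹*g⁻¹) := by group
    rw [h] at h1
    rw [show g^3 = g*g*g by rw [pow_succ, pow_succ, pow_one]]
    exact h1.symm
  have hg2ne_gi : g⁻¹ * g⁻¹ ≠ g⁻¹ := by
    intro h
    apply hg1
    have : g⁻¹ = 1 := mul_left_cancel (show g⁻¹ * g⁻¹ = g⁻¹ * 1 by rw [mul_one]; exact h)
    rwa [inv_eq_one] at this
  have hcomm_g2g : comm' (g*g) g = 1 := by rw [comm']; group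
  -- x adjacent to gv whenever x ≠ g and x is not bad
  have adj_gv : ∀ x : ((relCenter G H)ᶜ : Set G), (x:G) ≠ g → comm' (x:G) g ≠ g⁻¹ →
      Γ.Adj x gv := by
    intro x hne hb
    exact ⟨fun h => hne (congrArg Subtype.val h), Or.inr hgH, hcomm_g x, hb⟩
  -- the key claim: any two vertices are joined by a walk of length ≤ 3
  have key : ∀ u v : ((relCenter G H)ᶜ : Set G), ∃ p : Γ.Walk u v, p.length ≤ 3 := by
    by_cases hA : (g*g) ∈ relCenter G H
    · -- g² central: no bad vertices exist
      have hnb : ∀ x : G, comm' x g ≠ g⁻¹ := by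
        intro x h
        have hc := hbad x h
        have e1 : x⁻¹ * (g*g) * x = g*g := by
          rw [mul_assoc, hA.2 x]
          group
        have e2 : x⁻¹ * (g*g) * x = ((g⁻¹*g⁻¹) * (g⁻¹*g⁻¹))⁻¹ := by
          calc x⁻¹ * (g*g) * x = ((x⁻¹ * g⁻¹ * x) * (x⁻¹ * g⁻¹ * x))⁻¹ := by
                simp [mul_inv_rev, mul_assoc]
          _ = ((g⁻¹*g⁻¹) * (g⁻¹*g⁻¹))⁻¹ := by rw [hc]
        have e3 : g*g = (g*g)*(g*g) := by
          conv_lhs => rw [← e1, e2]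
          simp [mul_inv_rev, mul_assoc]
        have e4 : g*g = 1 := (left_eq_mul.mp e3)
        apply hg1
        have h1 : x⁻¹ * g⁻¹ * x = 1 := by
          rw [hc, show g⁻¹*g⁻¹ = (g*g)⁻¹ by group, e4, inv_one]
        have := conj_eq_one' h1
        rwa [inv_eq_one] at this
      intro u v
      by_cases hu : u = gv
      · subst hu
        by_cases hv : v = gv
        · subst hv; exact ⟨SimpleGraph.Walk.nil, by simp⟩
        · have hvg : (v:G) ≠ g := fun h => hv (Subtype.ext h)
          exact ⟨(adj_gv v hvg (hnb v)).symm.toWalk, by simp⟩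
      · have hug : (u:G) ≠ g := fun h => hu (Subtype.ext h)
        by_cases hv : v = gv
        · subst hv
          exact ⟨(adj_gv u hug (hnb u)).toWalk, by simp⟩
        · have hvg : (v:G) ≠ g := fun h => hv (Subtype.ext h)
          exact ⟨SimpleGraph.Walk.cons (adj_gv u hug (hnb u))
            ((adj_gv v hvg (hnb v)).symm.toWalk), by simp⟩
    · -- g² is a vertex
      set g2v : ((relCenter G H)ᶜ : Set G) := ⟨g*g, hA⟩ with hg2vdef
      have adj_g2_gv : Γ.Adj g2v gv := by
        refine ⟨fun h => hg1 ?_, Or.inl (H.mul_mem hgH hgH), ?_, ?_⟩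
        · have : g * g = g := congrArg Subtype.val h
          exact mul_left_cancel (by rw [this, mul_one])
        · rw [hcomm_g2g]; exact fun h => hg1 h.symm
        · rw [hcomm_g2g]; intro h; exact hg1 (by rw [← inv_inv g, ← h, inv_one])
      have adj_bad : ∀ x : ((relCenter G H)ᶜ : Set G), comm' (x:G) g = g⁻¹ →
          Γ.Adj x g2v := by
        intro x hx
        refine ⟨fun h => ?_, Or.inr (H.mul_mem hgH hgH), ?_, ?_⟩
        · have hxv : (x:G) = g*g := congrArg Subtype.val h
          rw [hxv, hcomm_g2g] at hx
          exact hg1 (by rw [← inv_inv g, ← hx, inv_one])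
        · rw [hbad2 x hx]; exact hg2ne_g
        · rw [hbad2 x hx]; exact hg2ne_gi
      intro u v
      by_cases hub : comm' (u:G) g = g⁻¹
      · by_cases hvb : comm' (v:G) g = g⁻¹
        · exact ⟨SimpleGraph.Walk.cons (adj_bad u hub) ((adj_bad v hvb).symm.toWalk),
            by simp⟩
        · by_cases hv : v = gv
          · subst hv
            exact ⟨SimpleGraph.Walk.cons (adj_bad u hub) adj_g2_gv.toWalk, by simp⟩
          · have hvg : (v:G) ≠ g := fun h => hv (Subtype.ext h)
            exact ⟨SimpleGraph.Walk.cons (adj_bad u hub) (SimpleGraph.Walk.cons adj_g2_gv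
              ((adj_gv v hvg hvb).symm.toWalk)), by simp⟩
      · by_cases hu : u = gv
        · subst hu
          by_cases hvb : comm' (v:G) g = g⁻¹
          · exact ⟨SimpleGraph.Walk.cons adj_g2_gv.symm ((adj_bad v hvb).symm.toWalk),
              by simp⟩
          · by_cases hv : v = gv
            · subst hv; exact ⟨SimpleGraph.Walk.nil, by simp⟩
            · have hvg : (v:G) ≠ g := fun h => hv (Subtype.ext h)
              exact ⟨(adj_gv v hvg hvb).symm.toWalk, by simp⟩
        · have hug : (u:G) ≠ g := fun h => hu (Subtype.ext h)
          by_cases hvb : comm' (v:G) g = g⁻¹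
          · exact ⟨SimpleGraph.Walk.cons (adj_gv u hug hub) (SimpleGraph.Walk.cons
              adj_g2_gv.symm ((adj_bad v hvb).symm.toWalk)), by simp⟩
          · by_cases hv : v = gv
            · subst hv
              exact ⟨(adj_gv u hug hub).toWalk, by simp⟩
            · have hvg : (v:G) ≠ g := fun h => hv (Subtype.ext h)
              exact ⟨SimpleGraph.Walk.cons (adj_gv u hug hub)
                ((adj_gv v hvg hvb).symm.toWalk), by simp⟩
  have hne : Nonempty ((relCenter G H)ᶜ : Set G) := ⟨gv⟩
  refine ⟨⟨fun u v => ⟨(key u v).choose⟩⟩, fun u v => ?_, ?_⟩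
  · obtain ⟨p, hp⟩ := key u v
    exact (SimpleGraph.dist_le p).trans hp
  · have hed : Γ.ediam ≤ 3 := by
      apply SimpleGraph.ediam_le_of_edist_le
      intro u v
      obtain ⟨p, hp⟩ := key u v
      refine (SimpleGraph.edist_le p).trans ?_
      exact_mod_cast Nat.cast_le.mpr hp
    have := ENat.toNat_le_toNat hed (by simp)
    simpa [SimpleGraph.diam] using this
end

section
/- Let n ≥ 8 be even, G = D_{2n} the dihedral group of order 2n, H = ⟨a⟩ the cyclic subgroup of rotations, and g ∈ ⟨a²⟩ (i.e., g = a^{2i} for some i). Then the graph Δ_{H,G}^g is connected and its diameter equals 2. -/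
open SimpleGraph

namespace Stmt12Aux
open DihedralGroup

variable {n : ℕ}

lemma inv_r' (i : ZMod n) : (r i)⁻¹ = r (-i) := rfl
lemma inv_sr' (i : ZMod n) : (sr i)⁻¹ = sr i := rfl

lemma comm'_rr (i j : ZMod n) : comm' (r i) (r j) = r 0 := by
  simp only [comm', inv_r', r_mul_r]
  ring_nf

lemma comm'_rsr (i j : ZMod n) : comm' (r i) (sr j) = r (-(2*i)) := by
  simp only [comm', inv_r', inv_sr', r_mul_sr, sr_mul_r, sr_mul_sr]
  ring_nf

lemma memH_iff [NeZero n] (x : DihedralGroup n) :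
    x ∈ Subgroup.zpowers (r 1 : DihedralGroup n) ↔ ∃ i : ZMod n, x = r i := by
  constructor
  · rintro ⟨k, rfl⟩
    cases k with
    | ofNat m => exact ⟨m, by simp [zpow_natCast]⟩
    | negSucc m => exact ⟨-(m+1), by simp [zpow_negSucc, inv_r']⟩
  · rintro ⟨i, rfl⟩
    refine ⟨(i.val : ℤ), ?_⟩
    show (r 1 : DihedralGroup n) ^ ((i.val : ℤ)) = r i
    rw [zpow_natCast, r_one_pow]
    exact congrArg r (ZMod.natCast_rightInverse i)

lemma srH (j : ZMod n) [NeZero n] :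
    (sr j : DihedralGroup n) ∉ Subgroup.zpowers (r 1 : DihedralGroup n) := by
  rw [memH_iff]
  rintro ⟨i, h⟩
  exact absurd h (by simp)

lemma srV [NeZero n] (j : ZMod n) :
    (sr j : DihedralGroup n) ∈
      (relCenter (DihedralGroup n) (Subgroup.zpowers (r 1 : DihedralGroup n)))ᶜ :=
  fun h => srH j h.1

lemma rV (i : ZMod n) (h : 2*i ≠ 0) :
    (r i : DihedralGroup n) ∈
      (relCenter (DihedralGroup n) (Subgroup.zpowers (r 1 : DihedralGroup n)))ᶜ := by
  intro hc
  have h2 : sr (0 - i) = sr (0 + i) := hc.2 (sr 0)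
  simp only [sr.injEq, zero_sub, zero_add] at h2
  exact h (by rw [two_mul]; nth_rewrite 1 [← h2]; exact neg_add_cancel i)

lemma rV2 [NeZero n] (i : ZMod n)
    (h : (r i : DihedralGroup n) ∈
      (relCenter (DihedralGroup n) (Subgroup.zpowers (r 1 : DihedralGroup n)))ᶜ) :
    2*i ≠ 0 := by
  intro h0
  apply h
  refine ⟨(memH_iff _).mpr ⟨i, rfl⟩, ?_⟩
  have hni : -i = i := neg_eq_of_add_eq_zero_left (by rw [← two_mul]; exact h0)
  rintro (j | j)
  · simp [r_mul_r, add_comm]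
  · simp only [r_mul_sr, sr_mul_r]
    rw [sub_eq_add_neg, hni]

lemma ker2 (hne : Even n) (x : ZMod n) (hn : 8 ≤ n) (hx : 2*x = 0) :
    x = 0 ∨ x = ((n/2 : ℕ) : ZMod n) := by
  have : NeZero n := ⟨by omega⟩
  have hv : ((2 * x.val : ℕ) : ZMod n) = 0 := by
    push_cast
    rw [ZMod.natCast_rightInverse x]
    exact hx
  rw [ZMod.natCast_eq_zero_iff] at hv
  have hlt := ZMod.val_lt x
  obtain ⟨c, hc⟩ := hv
  have hc2 : c < 2 := by nlinarith
  interval_cases c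
  · left
    have : x.val = 0 := by omega
    rw [← ZMod.natCast_rightInverse x, this]; simp
  · right
    obtain ⟨k, hk⟩ := hne
    have : x.val = n / 2 := by omega
    rw [← ZMod.natCast_rightInverse x, this]

lemma fiber_le (hne : Even n) (hn : 8 ≤ n) (d : ZMod n) :
    haveI : NeZero n := ⟨by omega⟩
    (Finset.univ.filter (fun m : ZMod n => 2*m = d)).card ≤ 2 := by
  have : NeZero n := ⟨by omega⟩
  set B := Finset.univ.filter (fun m : ZMod n => 2*m = d) with hB
  by_cases hB0 : B.Nonempty
  · obtain ⟨s, hs⟩ := hB0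
    have hs' : 2*s = d := by simpa [hB] using hs
    have hsub : B ⊆ {s, s + ((n/2 : ℕ) : ZMod n)} := by
      intro m hm
      have hm' : 2*m = d := by simpa [hB] using hm
      have h0 : 2*(m - s) = 0 := by rw [mul_sub, hm', hs', sub_self]
      rcases ker2 hne (m - s) hn h0 with h | h
      · simp [sub_eq_zero.mp h]
      · have : m = s + ((n/2 : ℕ) : ZMod n) := by
          rw [← h]; ring
        simp [this]
    calc B.card ≤ _ := Finset.card_le_card hsub
    _ ≤ 2 := Finset.card_insert_le _ _ |>.trans (by simp)
  · rw [Finset.not_nonempty_iff_eq_empty] at hB0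
    simp [hB0]

lemma exists_good (hne : Even n) (hn : 8 ≤ n) (c i : ZMod n) :
    ∃ m : ZMod n, 2*m ≠ 0 ∧ 2*m ≠ c ∧ 2*m ≠ -c ∧ m ≠ i := by
  have : NeZero n := ⟨by omega⟩
  classical
  set B : Finset (ZMod n) :=
    (Finset.univ.filter (fun m : ZMod n => 2*m = 0)) ∪
    (Finset.univ.filter (fun m : ZMod n => 2*m = c)) ∪
    (Finset.univ.filter (fun m : ZMod n => 2*m = -c)) ∪ {i} with hB
  have hcard : B.card ≤ 7 := by
    calc B.card ≤ _ := (Finset.card_union_le _ _)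
    _ ≤ _ + 1 := by gcongr; simp
    _ ≤ 7 := by
      have h1 := fiber_le hne hn (0 : ZMod n)
      have h2 := fiber_le hne hn c
      have h3 := fiber_le hne hn (-c)
      have := Finset.card_union_le
        ((Finset.univ.filter (fun m : ZMod n => 2*m = 0)) ∪
         (Finset.univ.filter (fun m : ZMod n => 2*m = c)))
        (Finset.univ.filter (fun m : ZMod n => 2*m = -c))
      have := Finset.card_union_le
        (Finset.univ.filter (fun m : ZMod n => 2*m = 0))
        (Finset.univ.filter (fun m : ZMod n => 2*m = c))
      omega
  have hlt : Bᶜ.Nonempty := by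
    rw [← Finset.card_pos, Finset.card_compl, ZMod.card]
    omega
  obtain ⟨m, hm⟩ := hlt
  rw [Finset.mem_compl, hB] at hm
  simp only [Finset.mem_union, Finset.mem_filter, Finset.mem_univ, true_and,
    Finset.mem_singleton, not_or] at hm
  exact ⟨m, hm.1.1.1, hm.1.1.2, hm.1.2, hm.2⟩

end Stmt12Aux

open DihedralGroup Stmt12Aux

/-- for even `n ≥ 8`, `G = D_{2n}`, `H = ⟨a⟩` and `g ∈ ⟨a²⟩`,
the graph `Δ_{H,G}^g` is connected with diameter `2`. -/
theorem stmt12 (n : ℕ) (hn : 8 ≤ n) (hne : Even n)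
    (g : DihedralGroup n)
    (hg : g ∈ Subgroup.zpowers ((DihedralGroup.r 1 : DihedralGroup n) ^ 2)) :
    (gnc (DihedralGroup n) (Subgroup.zpowers (DihedralGroup.r 1 : DihedralGroup n)) g).Connected ∧
    (gnc (DihedralGroup n) (Subgroup.zpowers (DihedralGroup.r 1 : DihedralGroup n)) g).diam = 2 := by
  have hnz : NeZero n := ⟨by omega⟩
  have hgH : g ∈ Subgroup.zpowers (r 1 : DihedralGroup n) :=
    Subgroup.zpowers_le.mpr (Subgroup.pow_mem _ (Subgroup.mem_zpowers _) 2) hg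
  obtain ⟨c, rfl⟩ := (memH_iff g).mp hgH
  set Γ := gnc (DihedralGroup n) (Subgroup.zpowers (r 1 : DihedralGroup n)) (r c) with hΓ
  have adjRS : ∀ (i j : ZMod n)
      (hu : (r i : DihedralGroup n) ∈
        (relCenter (DihedralGroup n) (Subgroup.zpowers (r 1 : DihedralGroup n)))ᶜ)
      (hv : (sr j : DihedralGroup n) ∈
        (relCenter (DihedralGroup n) (Subgroup.zpowers (r 1 : DihedralGroup n)))ᶜ),
      2*i ≠ -c → 2*i ≠ c → Γ.Adj ⟨r i, hu⟩ ⟨sr j, hv⟩ := by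
    intro i j hu hv h1 h2
    refine ⟨?_, Or.inl ((memH_iff _).mpr ⟨i, rfl⟩), ?_, ?_⟩
    · intro h
      rw [Subtype.mk_eq_mk] at h
      exact absurd h (by simp)
    · show comm' (r i) (sr j) ≠ r c
      rw [comm'_rsr]
      intro h
      rw [r.injEq] at h
      exact h1 (neg_eq_iff_eq_neg.mp h)
    · show comm' (r i) (sr j) ≠ (r c)⁻¹
      rw [comm'_rsr, inv_r']
      intro h
      rw [r.injEq] at h
      exact h2 (neg_inj.mp h)
  have adjRR : ∀ (i j : ZMod n)
      (hu : (r i : DihedralGroup n) ∈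
        (relCenter (DihedralGroup n) (Subgroup.zpowers (r 1 : DihedralGroup n)))ᶜ)
      (hv : (r j : DihedralGroup n) ∈
        (relCenter (DihedralGroup n) (Subgroup.zpowers (r 1 : DihedralGroup n)))ᶜ),
      i ≠ j → c ≠ 0 → Γ.Adj ⟨r i, hu⟩ ⟨r j, hv⟩ := by
    intro i j hu hv hij hc
    refine ⟨?_, Or.inl ((memH_iff _).mpr ⟨i, rfl⟩), ?_, ?_⟩
    · intro h
      rw [Subtype.mk_eq_mk, r.injEq] at h
      exact hij h
    · show comm' (r i) (r j) ≠ r c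
      rw [comm'_rr]
      intro h
      rw [r.injEq] at h
      exact hc h.symm
    · show comm' (r i) (r j) ≠ (r c)⁻¹
      rw [comm'_rr, inv_r']
      intro h
      rw [r.injEq] at h
      exact hc (neg_eq_zero.mp h.symm)
  have key : ∀ u v : ((relCenter (DihedralGroup n)
      (Subgroup.zpowers (r 1 : DihedralGroup n)))ᶜ : Set (DihedralGroup n)),
      u ≠ v → Γ.Adj u v ∨ ∃ w, Γ.Adj u w ∧ Γ.Adj w v := by
    rintro ⟨(i | i), hu⟩ ⟨(j | j), hv⟩ huv
    · -- r, r
      have hij : i ≠ j := by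
        intro h
        exact huv (by simp [h])
      have hiV := rV2 i hu
      have hjV := rV2 j hv
      by_cases hc : c = 0
      · right
        refine ⟨⟨sr 0, srV 0⟩, adjRS i 0 hu (srV 0) ?_ ?_,
          (adjRS j 0 hv (srV 0) ?_ ?_).symm⟩
        · simpa [hc] using hiV
        · simpa [hc] using hiV
        · simpa [hc] using hjV
        · simpa [hc] using hjV
      · left
        exact adjRR i j hu hv hij hc
    · -- r, sr
      have hiV := rV2 i hu
      by_cases h1 : 2*i ≠ -c ∧ 2*i ≠ c
      · left
        exact adjRS i j hu hv h1.1 h1.2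
      · right
        have hc : c ≠ 0 := by
          intro h0
          rw [h0] at h1
          exact h1 ⟨by simpa using hiV, hiV⟩
        obtain ⟨m, hm0, hmc, hmc', hmi⟩ := exists_good hne hn c i
        exact ⟨⟨r m, rV m hm0⟩, adjRR i m hu (rV m hm0) (Ne.symm hmi) hc,
          adjRS m j (rV m hm0) hv hmc' hmc⟩
    · -- sr, r
      have hjV := rV2 j hv
      by_cases h1 : 2*j ≠ -c ∧ 2*j ≠ c
      · left
        exact (adjRS j i hv hu h1.1 h1.2).symm
      · right
        have hc : c ≠ 0 := by
          intro h0
          rw [h0] at h1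
          exact h1 ⟨by simpa using hjV, hjV⟩
        obtain ⟨m, hm0, hmc, hmc', hmj⟩ := exists_good hne hn c j
        exact ⟨⟨r m, rV m hm0⟩, (adjRS m i (rV m hm0) hu hmc' hmc).symm,
          adjRR m j (rV m hm0) hv hmj hc⟩
    · -- sr, sr
      obtain ⟨m, hm0, hmc, hmc', -⟩ := exists_good hne hn c 0
      right
      exact ⟨⟨r m, rV m hm0⟩, (adjRS m i (rV m hm0) hu hmc' hmc).symm,
        adjRS m j (rV m hm0) hv hmc' hmc⟩
  have hprec : Γ.Preconnected := by
    intro u v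
    by_cases h : u = v
    · rw [h]
    · rcases key u v h with hadj | ⟨w, h1, h2⟩
      · exact hadj.reachable
      · exact h1.reachable.trans h2.reachable
  have hconn : Γ.Connected := by
    rw [connected_iff]
    exact ⟨hprec, ⟨⟨sr 0, srV 0⟩⟩⟩
  have hle : Γ.ediam ≤ 2 := by
    apply ediam_le_of_edist_le
    intro u v
    by_cases h : u = v
    · rw [h, edist_self]
      exact zero_le
    · rcases key u v h with hadj | ⟨w, h1, h2⟩
      · exact le_trans (le_of_eq (edist_eq_one_iff_adj.mpr hadj)) one_le_two
      · calc Γ.edist u v ≤ Γ.edist u w + Γ.edist w v := Γ.edist_triangle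
          _ = 1 + 1 := by
            rw [edist_eq_one_iff_adj.mpr h1, edist_eq_one_iff_adj.mpr h2]
          _ = 2 := one_add_one_eq_two
  have hge : (2 : ℕ∞) ≤ Γ.ediam := by
    have h01 : (sr 0 : DihedralGroup n) ≠ sr 1 := by
      have : Fact (1 < n) := ⟨by omega⟩
      simp only [ne_eq, sr.injEq]
      exact zero_ne_one
    have huv : (⟨sr 0, srV 0⟩ : ((relCenter (DihedralGroup n)
        (Subgroup.zpowers (r 1 : DihedralGroup n)))ᶜ : Set (DihedralGroup n))) ≠ ⟨sr 1, srV 1⟩ :=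
      fun h => h01 (congrArg Subtype.val h)
    have hnadj : ¬ Γ.Adj ⟨sr 0, srV 0⟩ ⟨sr 1, srV 1⟩ := by
      rintro ⟨-, hmem, -, -⟩
      rcases hmem with h | h
      · exact srH 0 h
      · exact srH 1 h
    have h0 : Γ.edist ⟨sr 0, srV 0⟩ ⟨sr 1, srV 1⟩ ≠ 0 :=
      fun h => huv (edist_eq_zero_iff.mp h)
    have h1 : Γ.edist ⟨sr 0, srV 0⟩ ⟨sr 1, srV 1⟩ ≠ 1 :=
      fun h => hnadj (edist_eq_one_iff_adj.mp h)
    have hlt : 1 < Γ.edist ⟨sr 0, srV 0⟩ ⟨sr 1, srV 1⟩ :=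
      lt_of_le_of_ne (ENat.one_le_iff_ne_zero.mpr h0) (Ne.symm h1)
    calc (2 : ℕ∞) = 1 + 1 := one_add_one_eq_two.symm
      _ ≤ Γ.edist ⟨sr 0, srV 0⟩ ⟨sr 1, srV 1⟩ := (ENat.add_one_le_iff (by simp)).mpr hlt
      _ ≤ Γ.ediam := edist_le_ediam
  have hediam : Γ.ediam = 2 := le_antisymm hle hge
  refine ⟨hconn, ?_⟩
  show Γ.ediam.toNat = 2
  rw [hediam]
  rfl
end

section
/- Let n ≥ 8 be even, G = D_{2n} the dihedral group of order 2n, and H = ⟨a^{n/2}, a^r b⟩ = {1, a^{n/2}, a^r b, a^{n/2+r} b} for some 0 ≤ r < n/2, and let g ∈ ⟨a²⟩. If g = 1 then the graph Δ_{H,G}^g is connected and its diameter equals 2; if g ≠ 1 then Δ_{H,G}^g is not connected. -/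
open SimpleGraph

/-- `H = ⟨a^(n/2), a^r b⟩` inside `D_{2n}`, with `a` the rotation and `b` a reflection. -/
def H13 (n r : ℕ) : Subgroup (DihedralGroup n) :=
  Subgroup.closure
    {(DihedralGroup.r 1 : DihedralGroup n) ^ (n / 2), (DihedralGroup.r 1 : DihedralGroup n) ^ r * DihedralGroup.sr 0}


namespace Test
open DihedralGroup

variable {n : ℕ}

lemma inv_r (i : ZMod n) : (r i)⁻¹ = r (-i) := rfl
lemma inv_sr (i : ZMod n) : (sr i)⁻¹ = sr i := rfl

lemma comm'_r_r (i j : ZMod n) : comm' (r i) (r j) = 1 := by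
  simp only [comm', inv_r, r_mul_r, one_def, r.injEq]; ring

lemma comm'_r_sr (i j : ZMod n) : comm' (r i) (sr j) = r (-(i + i)) := by
  simp only [comm', inv_r, inv_sr, r_mul_r, r_mul_sr, sr_mul_r, sr_mul_sr, r.injEq]
  ring

lemma comm'_sr_r (i j : ZMod n) : comm' (sr i) (r j) = r (j + j) := by
  simp only [comm', inv_r, inv_sr, r_mul_r, r_mul_sr, sr_mul_r, sr_mul_sr, r.injEq]
  ring

lemma comm'_sr_sr (i j : ZMod n) : comm' (sr i) (sr j) = r (j + j - i - i) := by
  simp only [comm', inv_sr, r_mul_r, sr_mul_sr, r_mul_sr, sr_mul_r, r.injEq]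
  ring

lemma r_one_zpow (k : ℤ) : (r 1 : DihedralGroup n) ^ k = r (k : ZMod n) := by
  cases k with
  | ofNat m => simpa using r_one_pow m
  | negSucc m =>
    rw [zpow_negSucc, r_one_pow, inv_r]
    congr 1
    push_cast
    ring

lemma eq_zero_or_half (hn8 : 8 ≤ n) (hne : Even n) (i : ZMod n) (h : i + i = 0) :
    i = 0 ∨ i = ((n / 2 : ℕ) : ZMod n) := by
  haveI : NeZero n := ⟨by omega⟩
  have hv : ((i.val : ℕ) : ZMod n) = i := ZMod.natCast_zmod_val i
  have h2 : ((i.val + i.val : ℕ) : ZMod n) = 0 := by push_cast; rw [hv]; exact h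
  have hd : n ∣ i.val + i.val := (ZMod.natCast_eq_zero_iff _ n).mp h2
  have hlt : i.val < n := ZMod.val_lt i
  obtain ⟨t, ht⟩ := hd
  obtain ⟨s, hs⟩ := hne
  have htle : t < 2 := by
    rcases Nat.lt_or_ge t 2 with h' | h'
    · exact h'
    · exfalso
      have := Nat.mul_le_mul_left n h'
      omega
  have hv2 : i.val = 0 ∨ i.val = n / 2 := by interval_cases t <;> omega
  rcases hv2 with h' | h'
  · left; rw [← hv, h']; simp
  · right; rw [← hv, h']

lemma mem_H13_iff (hn8 : 8 ≤ n) (hne : Even n) (k : ℕ) (x : DihedralGroup n) :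
    x ∈ H13 n k ↔ x = r 0 ∨ x = r ((n / 2 : ℕ) : ZMod n) ∨
      x = sr (-(k : ZMod n)) ∨ x = sr (((n / 2 : ℕ) : ZMod n) - (k : ZMod n)) := by
  haveI : NeZero n := ⟨by omega⟩
  set c : ZMod n := ((n / 2 : ℕ) : ZMod n) with hcdef
  have hc : c + c = 0 := by
    obtain ⟨s, hs⟩ := hne
    rw [hcdef, ← Nat.cast_add, show n / 2 + n / 2 = n by omega, ZMod.natCast_self]
  set k' : ZMod n := ((k : ℕ) : ZMod n)
  let K : Subgroup (DihedralGroup n) :=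
    { carrier := {r 0, r c, sr (-k'), sr (c - k')}
      one_mem' := by left; exact one_def
      inv_mem' := by
        rintro x (rfl | rfl | rfl | rfl)
        · left; rw [inv_r, neg_zero]
        · right; left; rw [inv_r]; congr 1; linear_combination -hc
        · right; right; left; rw [inv_sr]
        · right; right; right; exact rfl
      mul_mem' := by
        rintro x y (rfl | rfl | rfl | rfl) (rfl | rfl | rfl | rfl) <;>
          simp only [r_mul_r, r_mul_sr, sr_mul_r, sr_mul_sr, Set.mem_insert_iff,
            Set.mem_singleton_iff, r.injEq, sr.injEq, reduceCtorEq, false_or, or_false]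
        all_goals
          first
            | (left; first | ring1 | linear_combination hc | linear_combination -hc)
            | (right; first | ring1 | linear_combination hc | linear_combination -hc)
            | (first | ring1 | linear_combination hc | linear_combination -hc) }
  constructor
  · intro hx
    have hle : H13 n k ≤ K := by
      rw [H13, Subgroup.closure_le]
      rintro x (rfl | rfl)
      · right; left
        rw [r_one_pow]
      · right; right; left
        rw [r_one_pow, r_mul_sr, zero_sub]
    have := hle hx
    exact this
  · have hmem : ∀ y ∈ ({(r 1 : DihedralGroup n) ^ (n / 2), (r 1 : DihedralGroup n) ^ k * sr 0} : Set _), y ∈ H13 n k :=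
      fun y hy => Subgroup.subset_closure hy
    have hB : r c ∈ H13 n k := by
      simpa [r_one_pow] using hmem _ (Or.inl rfl)
    have hC : sr (-k') ∈ H13 n k := by
      have := hmem _ (Or.inr rfl)
      rwa [r_one_pow, r_mul_sr, zero_sub] at this
    rintro (rfl | rfl | rfl | rfl)
    · rw [← one_def]; exact one_mem _
    · exact hB
    · exact hC
    · have := mul_mem hB hC
      rwa [r_mul_sr, show -k' - c = c - k' by linear_combination -hc] at this

end Test


lemma gnc_adj (G : Type*) [Group G] (H : Subgroup G) (g : G)
    {x y : ((relCenter G H)ᶜ : Set G)} :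
    (gnc G H g).Adj x y ↔ (x ≠ y ∧ ((x : G) ∈ H ∨ (y : G) ∈ H) ∧
      comm' (x : G) (y : G) ≠ g ∧ comm' (x : G) (y : G) ≠ g⁻¹) := Iff.rfl

/-- for even `n ≥ 8`, `G = D_{2n}`, `H = ⟨a^(n/2), a^r b⟩`
(`0 ≤ r < n/2`) and `g ∈ ⟨a²⟩`: if `g = 1` then `Δ_{H,G}^g` is connected with
diameter `2`; if `g ≠ 1` then it is not connected. -/
theorem stmt13 (n : ℕ) (hn : 8 ≤ n) (hne : Even n) (r : ℕ) (hr : r < n / 2)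
    (g : DihedralGroup n)
    (hg : g ∈ Subgroup.zpowers ((DihedralGroup.r 1 : DihedralGroup n) ^ 2)) :
    (g = 1 → (gnc (DihedralGroup n) (H13 n r) g).Connected ∧
      (gnc (DihedralGroup n) (H13 n r) g).diam = 2) ∧
    (g ≠ 1 → ¬ (gnc (DihedralGroup n) (H13 n r) g).Connected) := by
  classical
  haveI : NeZero n := ⟨by omega⟩
  set c : ZMod n := ((n / 2 : ℕ) : ZMod n) with hcdef
  have hc : c + c = 0 := by
    obtain ⟨s, hs⟩ := hne
    rw [hcdef, ← Nat.cast_add, show n / 2 + n / 2 = n by omega, ZMod.natCast_self]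
  have h2ne : (1 : ZMod n) + 1 ≠ 0 := by
    intro h
    have h2 : ((2 : ℕ) : ZMod n) = 0 := by push_cast; linear_combination h
    have := (ZMod.natCast_eq_zero_iff 2 n).mp h2
    have := Nat.le_of_dvd (by norm_num) this
    omega
  have hcne : c ≠ 0 := by
    intro h
    rw [hcdef] at h
    have := (ZMod.natCast_eq_zero_iff (n / 2) n).mp h
    have := Nat.le_of_dvd (by omega) this
    omega
  set k' : ZMod n := ((r : ℕ) : ZMod n) with hk'def
  have hmemH : ∀ x : DihedralGroup n, x ∈ H13 n r ↔
      x = DihedralGroup.r 0 ∨ x = DihedralGroup.r c ∨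
      x = DihedralGroup.sr (-k') ∨ x = DihedralGroup.sr (c - k') :=
    Test.mem_H13_iff hn hne r
  have htwo : ∀ i : ZMod n, i + i = 0 → i = 0 ∨ i = c := Test.eq_zero_or_half hn hne
  have hvert : ∀ x : DihedralGroup n, x ∈ (relCenter (DihedralGroup n) (H13 n r))ᶜ ↔
      x ≠ DihedralGroup.r 0 ∧ x ≠ DihedralGroup.r c := by
    intro x
    simp only [Set.mem_compl_iff]
    constructor
    · intro hx
      constructor
      · rintro rfl
        exact hx ⟨(hmemH _).mpr (Or.inl rfl), by
          intro y; rw [← DihedralGroup.one_def, one_mul, mul_one]⟩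
      · rintro rfl
        refine hx ⟨(hmemH _).mpr (Or.inr (Or.inl rfl)), ?_⟩
        rintro (j | j)
        · rw [DihedralGroup.r_mul_r, DihedralGroup.r_mul_r, add_comm]
        · rw [DihedralGroup.r_mul_sr, DihedralGroup.sr_mul_r]
          congr 1
          linear_combination -hc
    · rintro ⟨h0, hcc⟩ ⟨hH, hcen⟩
      rcases (hmemH _).mp hH with rfl | rfl | rfl | rfl
      · exact h0 rfl
      · exact hcc rfl
      all_goals {
        have h' := hcen (DihedralGroup.r 1)
        rw [DihedralGroup.sr_mul_r, DihedralGroup.r_mul_sr, DihedralGroup.sr.injEq] at h'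
        exact h2ne (by linear_combination h') }
  have hscompl : ∀ j : ZMod n,
      DihedralGroup.sr j ∈ (relCenter (DihedralGroup n) (H13 n r))ᶜ :=
    fun j => (hvert _).mpr ⟨(by intro h; cases h), by simp⟩
  let V := ((relCenter (DihedralGroup n) (H13 n r))ᶜ : Set (DihedralGroup n))
  let h1 : V := ⟨DihedralGroup.sr (-k'), hscompl _⟩
  let h2v : V := ⟨DihedralGroup.sr (c - k'), hscompl _⟩
  have h1c0 : (1 : ZMod n) ≠ 0 := fun h => h2ne (by linear_combination 2 * h)
  have h1cc : (1 : ZMod n) ≠ c := fun h => h2ne (by linear_combination h + h + hc)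
  let v1 : V := ⟨DihedralGroup.r 1, (hvert _).mpr ⟨by intro h; exact h1c0 (DihedralGroup.r.inj h), by simpa using h1cc⟩⟩
  have hne12 : h1 ≠ h2v := by
    intro h
    have h' : DihedralGroup.sr (-k') = DihedralGroup.sr (c - k') := congrArg Subtype.val h
    simp only [DihedralGroup.sr.injEq] at h'
    exact hcne (by linear_combination -h')
  constructor
  · -- g = 1
    rintro rfl
    have hadj' : ∀ i0 : ZMod n, DihedralGroup.sr i0 ∈ H13 n r →
        ∀ v : V, v.val ≠ DihedralGroup.sr i0 → v.val ≠ DihedralGroup.sr (i0 + c) →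
        (gnc (DihedralGroup n) (H13 n r) 1).Adj v ⟨DihedralGroup.sr i0, hscompl _⟩ := by
      intro i0 hi0 v hv1 hv2
      have hcm : comm' (v.val) (DihedralGroup.sr i0) ≠ 1 := by
        obtain ⟨x, hx⟩ := v
        rcases x with j | j
        · obtain ⟨hj0, hjc⟩ := (hvert _).mp hx
          rw [Test.comm'_r_sr, DihedralGroup.one_def, ne_eq, DihedralGroup.r.injEq]
          intro h
          rcases htwo j (by linear_combination -h) with rfl | rfl
          · exact hj0 rfl
          · exact hjc rfl
        · rw [Test.comm'_sr_sr, DihedralGroup.one_def, ne_eq, DihedralGroup.r.injEq]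
          intro h
          rcases htwo (i0 - j) (by linear_combination h) with h' | h'
          · refine hv1 ?_
            show DihedralGroup.sr j = DihedralGroup.sr i0
            congr 1
            linear_combination -h'
          · refine hv2 ?_
            show DihedralGroup.sr j = DihedralGroup.sr (i0 + c)
            congr 1
            linear_combination -h' - hc
      refine (gnc_adj _ _ _).mpr ⟨?_, Or.inr hi0, hcm, by rwa [inv_one]⟩
      intro h
      exact hv1 (congrArg Subtype.val h)
    have hH1 : DihedralGroup.sr (-k') ∈ H13 n r :=
      (hmemH _).mpr (Or.inr (Or.inr (Or.inl rfl)))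
    have hH2 : DihedralGroup.sr (c - k') ∈ H13 n r :=
      (hmemH _).mpr (Or.inr (Or.inr (Or.inr rfl)))
    have hadj_h1 : ∀ v : V, v ≠ h1 → v ≠ h2v →
        (gnc (DihedralGroup n) (H13 n r) 1).Adj v h1 := by
      intro v hv1 hv2
      exact hadj' (-k') hH1 v (fun h => hv1 (Subtype.ext h))
        (fun h => hv2 (Subtype.ext (by rw [h]; congr 1; ring)))
    have hadj_h2 : ∀ v : V, v ≠ h1 → v ≠ h2v →
        (gnc (DihedralGroup n) (H13 n r) 1).Adj v h2v := by
      intro v hv1 hv2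
      exact hadj' (c - k') hH2 v (fun h => hv2 (Subtype.ext h))
        (fun h => hv1 (Subtype.ext (by rw [h]; congr 1; linear_combination hc)))
    have hv1h1 : v1 ≠ h1 := fun h => by simpa using congrArg Subtype.val h
    have hv1h2 : v1 ≠ h2v := fun h => by simpa using congrArg Subtype.val h
    have hA1 : (gnc (DihedralGroup n) (H13 n r) 1).Adj v1 h1 := hadj_h1 v1 hv1h1 hv1h2
    have hA2 : (gnc (DihedralGroup n) (H13 n r) 1).Adj v1 h2v := hadj_h2 v1 hv1h1 hv1h2
    have hnadj : ¬ (gnc (DihedralGroup n) (H13 n r) 1).Adj h1 h2v := by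
      intro h
      obtain ⟨-, -, hcm, -⟩ := (gnc_adj _ _ _).mp h
      apply hcm
      show comm' (DihedralGroup.sr (-k')) (DihedralGroup.sr (c - k')) = 1
      rw [Test.comm'_sr_sr, DihedralGroup.one_def]
      congr 1
      linear_combination hc
    have hreach : ∀ u : V, (gnc (DihedralGroup n) (H13 n r) 1).Reachable u h1 := by
      intro u
      by_cases hu1 : u = h1
      · rw [hu1]
      · by_cases hu2 : u = h2v
        · rw [hu2]
          exact (hA2.symm.reachable).trans hA1.reachable
        · exact (hadj_h1 u hu1 hu2).reachable
    have hconn : (gnc (DihedralGroup n) (H13 n r) 1).Connected :=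
      (SimpleGraph.connected_iff _).mpr
        ⟨fun u v => (hreach u).trans (hreach v).symm, ⟨h1⟩⟩
    refine ⟨hconn, ?_⟩
    have hAle : ∀ {a b : V}, (gnc (DihedralGroup n) (H13 n r) 1).Adj a b →
        (gnc (DihedralGroup n) (H13 n r) 1).edist a b ≤ 2 := by
      intro a b h
      calc (gnc (DihedralGroup n) (H13 n r) 1).edist a b = 1 :=
            SimpleGraph.edist_eq_one_iff_adj.mpr h
        _ ≤ 2 := by norm_num
    have htri : ∀ (a b m : V), (gnc (DihedralGroup n) (H13 n r) 1).Adj a m →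
        (gnc (DihedralGroup n) (H13 n r) 1).Adj m b →
        (gnc (DihedralGroup n) (H13 n r) 1).edist a b ≤ 2 := by
      intro a b m ha hb
      calc (gnc (DihedralGroup n) (H13 n r) 1).edist a b
          ≤ (gnc _ _ 1).edist a m + (gnc _ _ 1).edist m b := SimpleGraph.edist_triangle
        _ ≤ 1 + 1 := by
            gcongr <;> exact le_of_eq (SimpleGraph.edist_eq_one_iff_adj.mpr ‹_›)
        _ = 2 := by norm_num
    have hle : ∀ u v : V, (gnc (DihedralGroup n) (H13 n r) 1).edist u v ≤ 2 := by
      intro u v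
      rcases eq_or_ne u v with rfl | huv
      · simp [SimpleGraph.edist_self]
      rcases eq_or_ne u h1 with rfl | hu1
      · rcases eq_or_ne v h2v with rfl | hv2
        · exact htri _ _ v1 hA1.symm hA2
        · exact hAle (hadj_h1 v (Ne.symm huv) hv2).symm
      rcases eq_or_ne u h2v with rfl | hu2
      · rcases eq_or_ne v h1 with rfl | hv1
        · exact htri _ _ v1 hA2.symm hA1
        · exact hAle (hadj_h2 v hv1 (Ne.symm huv)).symm
      rcases eq_or_ne v h1 with rfl | hv1
      · exact hAle (hadj_h1 u hu1 hu2)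
      rcases eq_or_ne v h2v with rfl | hv2
      · exact hAle (hadj_h2 u hu1 hu2)
      · exact htri _ _ h1 (hadj_h1 u hu1 hu2) (hadj_h1 v hv1 hv2).symm
    have hediam : (gnc (DihedralGroup n) (H13 n r) 1).ediam = 2 := by
      refine le_antisymm (SimpleGraph.ediam_le_of_edist_le fun u v => hle u v) ?_
      have h1le : (1 : ℕ∞) ≤ (gnc (DihedralGroup n) (H13 n r) 1).edist h1 h2v :=
        Order.one_le_iff_pos.mpr (SimpleGraph.edist_pos_of_ne hne12)
      have hlt : (1 : ℕ∞) < (gnc (DihedralGroup n) (H13 n r) 1).edist h1 h2v :=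
        lt_of_le_of_ne h1le
          (fun h => hnadj (SimpleGraph.edist_eq_one_iff_adj.mp h.symm))
      have h2le : (2 : ℕ∞) ≤ (gnc (DihedralGroup n) (H13 n r) 1).edist h1 h2v := by
        have h' := (ENat.add_one_le_iff (by norm_num : (1 : ℕ∞) ≠ ⊤)).mpr hlt
        calc (2 : ℕ∞) = 1 + 1 := by norm_num
          _ ≤ _ := h'
      exact le_trans h2le SimpleGraph.edist_le_ediam
    show (SimpleGraph.ediam _).toNat = 2
    rw [hediam]
    rfl
  · -- g ≠ 1
    intro hg1 hconn
    obtain ⟨kz, hkz⟩ := Subgroup.mem_zpowers_iff.mp hg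
    set m : ZMod n := ((kz : ℤ) : ZMod n) with hmdef
    have hgm : g = DihedralGroup.r (m + m) := by
      rw [← hkz, ← zpow_natCast (DihedralGroup.r 1 : DihedralGroup n) 2, ← zpow_mul,
        Test.r_one_zpow]
      congr 1
      push_cast
      ring
    have hm0 : m ≠ 0 := by
      rintro h
      exact hg1 (by rw [hgm, h, add_zero, ← DihedralGroup.one_def])
    have hmc : m ≠ c := by
      rintro h
      exact hg1 (by rw [hgm, h, hc, ← DihedralGroup.one_def])
    let v0 : V := ⟨DihedralGroup.r m, (hvert _).mpr ⟨by intro h; exact hm0 (DihedralGroup.r.inj h), by simpa using hmc⟩⟩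
    have hv0h1 : v0 ≠ h1 := fun h => by simpa using congrArg Subtype.val h
    obtain ⟨w⟩ := hconn.preconnected v0 h1
    have hadj0 := w.adj_snd (SimpleGraph.Walk.not_nil_of_ne hv0h1)
    obtain ⟨hne', hH, hcm1, hcm2⟩ := (gnc_adj _ _ _).mp hadj0
    have hval : (v0 : DihedralGroup n) = DihedralGroup.r m := rfl
    rcases hH with hH | hH
    · rw [hval] at hH
      rcases (hmemH _).mp hH with h | h | h | h
      · exact hm0 (DihedralGroup.r.inj h)
      · exact hmc (by simpa using h)
      · exact absurd h (by simp)
      · exact absurd h (by simp)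
    · have hu := (hvert _).mp (w.getVert 1).2
      rcases (hmemH _).mp hH with h | h | h | h
      · exact hu.1 h
      · exact hu.2 h
      all_goals {
        apply hcm2
        rw [hval, h, Test.comm'_r_sr, hgm]
        rfl }
end

section
/- Let n ≥ 8 be even, G = D_{2n} the dihedral group of order 2n, H = ⟨a^r b⟩ = {1, a^r b} for some 1 ≤ r ≤ n, and g ∈ ⟨a²⟩. Then the graph Δ_{H,G}^g is not connected. -/
open SimpleGraph

-- aux lemmas
lemma isolated_reachable {V : Type*} {G : SimpleGraph V} {v : V}
    (h : ∀ w, ¬ G.Adj v w) {w : V} (hr : G.Reachable v w) : v = w := by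
  obtain ⟨p⟩ := hr
  cases p with
  | nil => rfl
  | cons a _ => exact absurd a (h _)

namespace DihedralGroup

lemma sr_inv (n : ℕ) (i : ZMod n) : (sr i : DihedralGroup n)⁻¹ = sr i :=
  inv_eq_of_mul_eq_one_right (sr_mul_self i)

lemma r_inv (n : ℕ) (i : ZMod n) : (r i : DihedralGroup n)⁻¹ = r (-i) :=
  inv_eq_of_mul_eq_one_right (by rw [r_mul_r, add_neg_cancel, r_zero])

lemma mem_zpowers_sr (n : ℕ) (t : ZMod n) (x : DihedralGroup n) :
    x ∈ Subgroup.zpowers (sr t : DihedralGroup n) ↔ x = 1 ∨ x = sr t := by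
  constructor
  · rintro ⟨k, hk⟩
    have h2 : (sr t : DihedralGroup n) ^ (2 : ℤ) = 1 := by
      rw [zpow_two, sr_mul_self]
    rw [← hk]
    show (sr t : DihedralGroup n) ^ k = 1 ∨ (sr t : DihedralGroup n) ^ k = sr t
    rcases Int.even_or_odd k with ⟨m, hm⟩ | ⟨m, hm⟩
    · left
      rw [hm, ← two_mul, zpow_mul, h2, one_zpow]
    · right
      rw [hm, zpow_add, zpow_mul, h2, one_zpow, one_mul, zpow_one]
  · rintro (rfl | rfl)
    · exact one_mem _
    · exact Subgroup.mem_zpowers _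

lemma r_one_zpow' (n : ℕ) (k : ℤ) :
    (r 1 : DihedralGroup n) ^ k = r (k : ZMod n) := by
  rcases k with m | m
  · rw [Int.ofNat_eq_coe, zpow_natCast, r_one_pow]
    push_cast
    rfl
  · rw [zpow_negSucc, r_one_pow, r_inv]
    congr 1
    push_cast
    ring

end DihedralGroup

/-- for even `n ≥ 8`, `G = D_{2n}`, `H = ⟨a^r b⟩` (`1 ≤ r ≤ n`) and
`g ∈ ⟨a²⟩`, the graph `Δ_{H,G}^g` is not connected. -/
theorem stmt14 (n : ℕ) (hn : 8 ≤ n) (hne : Even n)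
    (r : ℕ) (hr1 : 1 ≤ r) (hr2 : r ≤ n)
    (g : DihedralGroup n)
    (hg : g ∈ Subgroup.zpowers ((DihedralGroup.r 1 : DihedralGroup n) ^ 2)) :
    ¬ (gnc (DihedralGroup n)
        (Subgroup.zpowers ((DihedralGroup.r 1 : DihedralGroup n) ^ r * DihedralGroup.sr 0)) g).Connected := by
  have hnz : NeZero n := ⟨by omega⟩
  -- the generator of H is sr (-r)
  have hHgen : (DihedralGroup.r 1 : DihedralGroup n) ^ r * DihedralGroup.sr 0
      = DihedralGroup.sr (-(r : ZMod n)) := by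
    rw [DihedralGroup.r_one_pow, DihedralGroup.r_mul_sr, zero_sub]
  set t : ZMod n := -(r : ZMod n) with ht
  set H := Subgroup.zpowers ((DihedralGroup.r 1 : DihedralGroup n) ^ r * DihedralGroup.sr 0) with hH
  have hmemH : ∀ x : DihedralGroup n, x ∈ H ↔ x = 1 ∨ x = DihedralGroup.sr t := by
    intro x
    rw [hH, hHgen]
    exact DihedralGroup.mem_zpowers_sr n t x
  -- g = r c with c = 2 * something
  obtain ⟨k, hk⟩ := hg
  have hg' : g = DihedralGroup.r ((2 * k : ℤ) : ZMod n) := by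
    rw [← hk]
    show ((DihedralGroup.r 1 : DihedralGroup n) ^ 2) ^ k = _
    rw [← zpow_natCast (DihedralGroup.r 1 : DihedralGroup n) 2, ← zpow_mul,
      DihedralGroup.r_one_zpow']
    norm_num
  -- choose j ≠ 0 with 2 * j = c
  set c : ZMod n := ((2 * k : ℤ) : ZMod n) with hc
  obtain ⟨j, hj0, hjc⟩ : ∃ j : ZMod n, j ≠ 0 ∧ j + j = c := by
    by_cases hk0 : ((k : ℤ) : ZMod n) = 0
    · refine ⟨((n / 2 : ℕ) : ZMod n), ?_, ?_⟩
      · rw [ne_eq, ZMod.natCast_eq_zero_iff]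
        intro hdvd
        have := Nat.le_of_dvd (by omega) hdvd
        omega
      · have h2 : ((n / 2 : ℕ) : ZMod n) + ((n / 2 : ℕ) : ZMod n) = ((n : ℕ) : ZMod n) := by
          rw [← Nat.cast_add]
          congr 1
          obtain ⟨m, hm⟩ := hne
          omega
        rw [h2, ZMod.natCast_self, hc]
        push_cast
        rw [hk0]; ring
    · refine ⟨((k : ℤ) : ZMod n), hk0, ?_⟩
      rw [hc]; push_cast; ring
  -- the two vertices
  have hyZ : (DihedralGroup.r j : DihedralGroup n) ∈ (relCenter (DihedralGroup n) H)ᶜ := by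
    intro ⟨hmem, _⟩
    rw [hmemH] at hmem
    rcases hmem with h | h
    · rw [DihedralGroup.one_def] at h
      exact hj0 (by injection h)
    · injection h
  have hsZ : (DihedralGroup.sr t : DihedralGroup n) ∈ (relCenter (DihedralGroup n) H)ᶜ := by
    intro ⟨_, hcomm⟩
    have := hcomm (DihedralGroup.r 1)
    rw [DihedralGroup.sr_mul_r, DihedralGroup.r_mul_sr] at this
    have h1 : t + 1 = t - 1 := by injection this
    have h2 : (2 : ZMod n) = 0 := by linear_combination h1
    have : ((2:ℕ) : ZMod n) = 0 := by exact_mod_cast h2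
    rw [ZMod.natCast_eq_zero_iff] at this
    have := Nat.le_of_dvd (by norm_num) this
    omega
  intro hconn
  have hreach := hconn.preconnected ⟨_, hyZ⟩ ⟨_, hsZ⟩
  have hiso : ∀ w, ¬ (gnc (DihedralGroup n) H g).Adj ⟨_, hyZ⟩ w := by
    rintro ⟨z, hz⟩ ⟨hne', hHor, hc1, hc2⟩
    have hzH : z ∈ H := by
      rcases hHor with h | h
      · exfalso
        rw [hmemH] at h
        rcases h with h | h
        · rw [DihedralGroup.one_def] at h; exact hj0 (by injection h)
        · injection h
      · exact h
    rw [hmemH] at hzH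
    rcases hzH with rfl | rfl
    · exact hz ⟨one_mem _, fun y => by rw [one_mul, mul_one]⟩
    · -- comm' (r j) (sr t) = g⁻¹
      apply hc2
      rw [comm'_swap]
      congr 1
      -- comm' (sr t) (r j) = g
      show (DihedralGroup.sr t)⁻¹ * (DihedralGroup.r j)⁻¹ * DihedralGroup.sr t * DihedralGroup.r j = g
      rw [DihedralGroup.sr_inv, DihedralGroup.r_inv, DihedralGroup.sr_mul_r,
        DihedralGroup.sr_mul_sr, DihedralGroup.r_mul_r, hg']
      congr 1
      rw [← hjc]
      ring
  have := isolated_reachable hiso hreach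
  have : (DihedralGroup.r j : DihedralGroup n) = DihedralGroup.sr t := congrArg Subtype.val this
  injection this
end

section
/- Let n ≥ 8 with n divisible by 4, G = D_{2n} the dihedral group of order 2n, H = ⟨a², b⟩ or H = ⟨a², ab⟩, and g ∈ ⟨a²⟩. If g = 1 then the graph Δ_{H,G}^g is connected and its diameter equals 2; if g ≠ 1 then Δ_{H,G}^g is connected and its diameter is at most 3. -/
open SimpleGraph

namespace Stmt16Aux

open DihedralGroup

variable {n : ℕ}

lemma r_inv (i : ZMod n) : (r i)⁻¹ = r (-i) := rfl

lemma sr_inv (i : ZMod n) : (sr i)⁻¹ = sr i := rfl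

lemma comm'_rr (i j : ZMod n) : comm' (r i) (r j) = r 0 := by
  simp only [comm', r_inv, r_mul_r]
  congr 1; ring

lemma comm'_rsr (i j : ZMod n) : comm' (r i) (sr j) = r (-(2 * i)) := by
  simp only [comm', r_inv, sr_inv, r_mul_sr, sr_mul_r, sr_mul_sr]
  congr 1; ring

lemma comm'_srr (i j : ZMod n) : comm' (sr i) (r j) = r (2 * j) := by
  simp only [comm', r_inv, sr_inv, r_mul_sr, sr_mul_r, sr_mul_sr, r_mul_r]
  congr 1; ring

lemma comm'_srsr (i j : ZMod n) : comm' (sr i) (sr j) = r (2 * (j - i)) := by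
  simp only [comm', r_inv, sr_inv, r_mul_sr, sr_mul_r, sr_mul_sr, r_mul_r]
  congr 1; ring

lemma r_pow (i : ZMod n) (m : ℕ) : (r i) ^ m = r ((m : ZMod n) * i) := by
  induction m with
  | zero => simp
  | succ m ih =>
      rw [pow_succ, ih, r_mul_r]
      congr 1; push_cast; ring

lemma r_zpow (i : ZMod n) (k : ℤ) : (r i) ^ k = r ((k : ZMod n) * i) := by
  cases k with
  | ofNat m =>
      rw [Int.ofNat_eq_coe, zpow_natCast, r_pow]
      congr 1; push_cast; ring
  | negSucc m =>
      rw [zpow_negSucc, r_pow, r_inv]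
      congr 1; push_cast [Int.cast_negSucc]; ring

lemma even_decomp [NeZero n] (h2 : 2 ∣ n) {i : ZMod n}
    (h : ZMod.castHom h2 (ZMod 2) i = 0) : ∃ j : ZMod n, i = 2 * j := by
  have hv : ((i.val : ℕ) : ZMod 2) = 0 := by
    rwa [ZMod.castHom_apply, ← ZMod.natCast_val] at h
  rw [ZMod.natCast_eq_zero_iff] at hv
  obtain ⟨m, hm⟩ := hv
  refine ⟨(m : ZMod n), ?_⟩
  have hi : ((i.val : ℕ) : ZMod n) = i := by rw [ZMod.natCast_val, ZMod.cast_id]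
  rw [← hi, hm]
  push_cast; ring

lemma mem_closure_r [NeZero n] (S : Set (DihedralGroup n)) (hS : (r 1) ^ 2 ∈ S) (j : ZMod n) :
    r (2 * j) ∈ Subgroup.closure S := by
  have h1 : ((r 1 : DihedralGroup n) ^ 2) ^ (j.val) = r (2 * j) := by
    rw [← pow_mul, r_one_pow]
    congr 1
    push_cast [ZMod.natCast_val, ZMod.cast_id]
    ring
  rw [← h1]
  exact pow_mem (Subgroup.subset_closure hS) _


theorem main (n : ℕ) (hn : 8 ≤ n) (h4 : 4 ∣ n) (h2 : 2 ∣ n)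
    (H : Subgroup (DihedralGroup n)) (e : ZMod n)
    (hre : ∀ i : ZMod n, ZMod.castHom h2 (ZMod 2) i = 0 → r i ∈ H)
    (hsre : ∀ i : ZMod n, ZMod.castHom h2 (ZMod 2) i = ZMod.castHom h2 (ZMod 2) e → sr i ∈ H)
    (g : DihedralGroup n)
    (hg : g ∈ Subgroup.zpowers ((r 1 : DihedralGroup n) ^ 2)) :
    (g = 1 → (gnc (DihedralGroup n) H g).Connected ∧
      (gnc (DihedralGroup n) H g).diam = 2) ∧
    (g ≠ 1 → (gnc (DihedralGroup n) H g).Connected ∧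
      (gnc (DihedralGroup n) H g).diam ≤ 3) := by
  haveI : NeZero n := ⟨by omega⟩
  set φ : ZMod n →+* ZMod 2 := ZMod.castHom h2 (ZMod 2) with hφdef
  set ψ : ZMod n →+* ZMod 4 := ZMod.castHom h4 (ZMod 4) with hψdef
  have hbr : ∀ x : ZMod n, φ x = ZMod.castHom (by norm_num : (2:ℕ) ∣ 4) (ZMod 2) (ψ x) := by
    intro x
    rw [hφdef, hψdef, ← RingHom.comp_apply, ZMod.castHom_comp]
  have hphi_iff : ∀ x : ZMod n, φ x = 0 ↔ (ψ x = 0 ∨ ψ x = 2) := by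
    intro x
    rw [hbr x]
    exact (by decide :
      ∀ y : ZMod 4, (ZMod.castHom (by norm_num : (2:ℕ) ∣ 4) (ZMod 2) y = 0 ↔ (y = 0 ∨ y = 2))) (ψ x)
  have hψ2 : ψ (2 : ZMod n) = 2 := by
    rw [show (2 : ZMod n) = ((2 : ℕ) : ZMod n) by norm_cast, map_natCast]
    decide
  have hψ4 : ψ (4 : ZMod n) = 0 := by
    rw [show (4 : ZMod n) = ((4 : ℕ) : ZMod n) by norm_cast, map_natCast]
    decide
  have F2 : (2 : ZMod n) ≠ 0 := by
    intro h
    rw [h, map_zero] at hψ2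
    exact absurd hψ2 (by decide)
  have F4 : (4 : ZMod n) ≠ 0 := by
    intro h
    have h' : ((4 : ℕ) : ZMod n) = 0 := by rwa [show ((4:ℕ) : ZMod n) = (4 : ZMod n) by norm_cast]
    rw [ZMod.natCast_eq_zero_iff] at h'
    have := Nat.le_of_dvd (by norm_num) h'
    omega
  have φ2 : φ (2 : ZMod n) = 0 := (hphi_iff 2).mpr (Or.inr hψ2)
  have φ1 : φ (1 : ZMod n) ≠ 0 := by rw [map_one]; decide
  have podd : ∀ x : ZMod n, φ x ≠ 0 → ψ (2 * x) = 2 := by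
    intro x hx
    rw [map_mul, hψ2]
    have hnx : ¬(ψ x = 0 ∨ ψ x = 2) := fun h => hx ((hphi_iff x).mpr h)
    exact (by decide : ∀ y : ZMod 4, ¬(y = 0 ∨ y = 2) → 2 * y = 2) (ψ x) hnx
  have hz : ∀ x : ZMod n, φ x ≠ 0 → 2 * x ≠ 0 := by
    intro x hx h0
    have hp := podd x hx
    rw [h0, map_zero] at hp
    exact absurd hp (by decide)
  have hzz : ∀ x : ZMod n, 2 * x = 0 → φ x = 0 := by
    intro x h
    by_contra hc
    exact hz x hc h
  -- vertex lemmas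
  have vsr : ∀ j : ZMod n, sr j ∈ (relCenter (DihedralGroup n) H)ᶜ := by
    intro j hmem
    have hc := hmem.2 (r 1)
    rw [sr_mul_r, r_mul_sr] at hc
    have hc' := sr.inj hc
    apply F2
    linear_combination hc'
  have vr : ∀ i : ZMod n, 2 * i ≠ 0 → r i ∈ (relCenter (DihedralGroup n) H)ᶜ := by
    intro i h2i hmem
    have hc := hmem.2 (sr 0)
    rw [r_mul_sr, sr_mul_r] at hc
    have hc' := sr.inj hc
    apply h2i
    linear_combination -hc'
  have vr' : ∀ i : ZMod n, r i ∈ (relCenter (DihedralGroup n) H)ᶜ → 2 * i ≠ 0 := by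
    intro i hv h0
    apply hv
    refine ⟨hre i (hzz i h0), ?_⟩
    intro y
    cases y with
    | r j => rw [r_mul_r, r_mul_r]; congr 1; ring
    | sr j => rw [r_mul_sr, sr_mul_r]; congr 1; linear_combination -h0
  have hv1 : r 1 ∈ (relCenter (DihedralGroup n) H)ᶜ := vr 1 (by rw [mul_one]; exact F2)
  have hv2 : r 2 ∈ (relCenter (DihedralGroup n) H)ᶜ :=
    vr 2 (by rw [show (2 * 2 : ZMod n) = 4 by norm_num]; exact F4)
  -- subtype ne helpers
  have neRS : ∀ {i j : ZMod n} {p1 : r i ∈ (relCenter (DihedralGroup n) H)ᶜ}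
      {p2 : sr j ∈ (relCenter (DihedralGroup n) H)ᶜ},
      (⟨r i, p1⟩ : ((relCenter (DihedralGroup n) H)ᶜ : Set (DihedralGroup n))) ≠ ⟨sr j, p2⟩ := by
    intro i j p1 p2 h
    exact absurd (congrArg Subtype.val h) (by simp)
  have neSR : ∀ {i j : ZMod n} {p1 : sr i ∈ (relCenter (DihedralGroup n) H)ᶜ}
      {p2 : r j ∈ (relCenter (DihedralGroup n) H)ᶜ},
      (⟨sr i, p1⟩ : ((relCenter (DihedralGroup n) H)ᶜ : Set (DihedralGroup n))) ≠ ⟨r j, p2⟩ := by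
    intro i j p1 p2 h
    exact absurd (congrArg Subtype.val h) (by simp)
  have neRR : ∀ {i j : ZMod n} {p1 : r i ∈ (relCenter (DihedralGroup n) H)ᶜ}
      {p2 : r j ∈ (relCenter (DihedralGroup n) H)ᶜ}, i ≠ j →
      (⟨r i, p1⟩ : ((relCenter (DihedralGroup n) H)ᶜ : Set (DihedralGroup n))) ≠ ⟨r j, p2⟩ := by
    intro i j p1 p2 hij h
    exact hij (r.inj (congrArg Subtype.val h))
  have neSS : ∀ {i j : ZMod n} {p1 : sr i ∈ (relCenter (DihedralGroup n) H)ᶜ}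
      {p2 : sr j ∈ (relCenter (DihedralGroup n) H)ᶜ}, i ≠ j →
      (⟨sr i, p1⟩ : ((relCenter (DihedralGroup n) H)ᶜ : Set (DihedralGroup n))) ≠ ⟨sr j, p2⟩ := by
    intro i j p1 p2 hij h
    exact hij (sr.inj (congrArg Subtype.val h))
  -- decompose g
  rw [Subgroup.mem_zpowers_iff] at hg
  obtain ⟨k, hk⟩ := hg
  have r1sq : (r 1 : DihedralGroup n) ^ 2 = r 2 := by
    rw [show (2:ℕ) = ((2:ℕ):ℕ) from rfl, r_one_pow]
    norm_num
  set t : ZMod n := ((k : ZMod n)) * 2 with htdef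
  have hgr : g = r t := by rw [htdef, ← hk, r1sq, r_zpow]
  have hψt : ψ t = 0 ∨ ψ t = 2 := by
    rw [htdef, map_mul, hψ2]
    exact (by decide : ∀ y : ZMod 4, y * 2 = 0 ∨ y * 2 = 2) _
  set Γ := gnc (DihedralGroup n) H g with hΓdef
  -- walk length bounds
  have wk1 : ∀ {u v : ((relCenter (DihedralGroup n) H)ᶜ : Set (DihedralGroup n))},
      Γ.Adj u v → Γ.edist u v ≤ 1 := by
    intro u v h
    simpa using edist_le (Walk.cons h Walk.nil)
  have wk2 : ∀ {u v : ((relCenter (DihedralGroup n) H)ᶜ : Set (DihedralGroup n))}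
      (w : ((relCenter (DihedralGroup n) H)ᶜ : Set (DihedralGroup n))),
      Γ.Adj u w → Γ.Adj w v → Γ.edist u v ≤ 2 := by
    intro u v w h1 h2
    simpa using edist_le (Walk.cons h1 (Walk.cons h2 Walk.nil))
  have wk3 : ∀ {u v : ((relCenter (DihedralGroup n) H)ᶜ : Set (DihedralGroup n))}
      (w w' : ((relCenter (DihedralGroup n) H)ᶜ : Set (DihedralGroup n))),
      Γ.Adj u w → Γ.Adj w w' → Γ.Adj w' v → Γ.edist u v ≤ 3 := by
    intro u v w w' h1 h2 h3
    simpa using edist_le (Walk.cons h1 (Walk.cons h2 (Walk.cons h3 Walk.nil)))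
  constructor
  · -- g = 1 : diameter exactly 2
    intro hg1
    have hone : ∀ c : ZMod n, c ≠ 0 →
        ((r c : DihedralGroup n) ≠ g ∧ (r c : DihedralGroup n) ≠ g⁻¹) := by
      intro c hc
      rw [hg1, inv_one, one_def]
      constructor <;> exact fun h => hc (r.inj h)
    have A1rs : ∀ (i : ZMod n) (hx : r i ∈ (relCenter (DihedralGroup n) H)ᶜ) (kk : ZMod n),
        φ kk = φ e → Γ.Adj ⟨r i, hx⟩ ⟨sr kk, vsr kk⟩ := by
      intro i hx kk hkk
      have h2i := vr' i hx
      have hc : (-(2 * i) : ZMod n) ≠ 0 := by simpa using h2i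
      refine ⟨neRS, Or.inr (hsre kk hkk), ?_, ?_⟩
      · show comm' (r i) (sr kk) ≠ g
        rw [comm'_rsr]
        exact (hone _ hc).1
      · show comm' (r i) (sr kk) ≠ g⁻¹
        rw [comm'_rsr]
        exact (hone _ hc).2
    have A1ss : ∀ (a b : ZMod n) (hb : sr b ∈ (relCenter (DihedralGroup n) H)ᶜ),
        φ a = φ e → 2 * (b - a) ≠ 0 → Γ.Adj ⟨sr a, vsr a⟩ ⟨sr b, hb⟩ := by
      intro a b hb ha hd
      have hab : a ≠ b := fun h => hd (by rw [h, sub_self, mul_zero])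
      refine ⟨neSS hab, Or.inl (hsre a ha), ?_, ?_⟩
      · show comm' (sr a) (sr b) ≠ g
        rw [comm'_srsr]
        exact (hone _ hd).1
      · show comm' (sr a) (sr b) ≠ g⁻¹
        rw [comm'_srsr]
        exact (hone _ hd).2
    -- distance ≤ 2 for  r _ , sr _  pairs
    have covRS : ∀ (i : ZMod n) (hx : r i ∈ (relCenter (DihedralGroup n) H)ᶜ)
        (j : ZMod n) (hy : sr j ∈ (relCenter (DihedralGroup n) H)ᶜ),
        Γ.edist ⟨r i, hx⟩ ⟨sr j, hy⟩ ≤ 2 := by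
      intro i hx j hy
      by_cases hj : φ j = φ e
      · exact le_trans (wk1 (A1rs i hx j hj)) (by norm_num)
      · refine wk2 ⟨sr e, vsr e⟩ (A1rs i hx e rfl) ?_
        refine A1ss e j hy rfl ?_
        apply hz
        rw [map_sub]
        exact sub_ne_zero_of_ne hj
    have cov : ∀ u v : ((relCenter (DihedralGroup n) H)ᶜ : Set (DihedralGroup n)),
        Γ.edist u v ≤ 2 := by
      rintro ⟨x, hx⟩ ⟨y, hy⟩
      cases x with
      | r i =>
        cases y with
        | r j => exact wk2 ⟨sr e, vsr e⟩ (A1rs i hx e rfl) ((A1rs j hy e rfl).symm)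
        | sr j => exact covRS i hx j hy
      | sr i =>
        cases y with
        | r j =>
          rw [SimpleGraph.edist_comm]
          exact covRS j hy i hx
        | sr j =>
          by_cases hi : φ i = φ e
          · by_cases hd : 2 * (j - i) = 0
            · -- hub sr (i+2)
              have h24 : (2 * ((i + 2) - i) : ZMod n) ≠ 0 := by
                intro hcon
                apply F4
                linear_combination hcon
              have hφ2 : φ (i + 2) = φ e := by rw [map_add, φ2, add_zero]; exact hi
              have h2' : (2 * (j - (i + 2)) : ZMod n) ≠ 0 := by
                intro hcon
                apply F4
                linear_combination hd - hcon
              exact wk2 ⟨sr (i + 2), vsr (i + 2)⟩ (A1ss i (i + 2) (vsr (i + 2)) hi h24)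
                (A1ss (i + 2) j hy hφ2 h2')
            · exact le_trans (wk1 (A1ss i j hy hi hd)) (by norm_num)
          · by_cases hj : φ j = φ e
            · refine le_trans (wk1 (A1ss j i hx hj ?_).symm) (by norm_num)
              apply hz
              rw [map_sub, hj]
              exact sub_ne_zero_of_ne (fun h => hi (h ▸ rfl))
            · refine wk2 ⟨sr e, vsr e⟩ (A1ss e i hx rfl ?_).symm (A1ss e j hy rfl ?_)
              · apply hz
                rw [map_sub]
                exact sub_ne_zero_of_ne hi
              · apply hz
                rw [map_sub]
                exact sub_ne_zero_of_ne hj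
    have hconn : Γ.Connected := by
      rw [connected_iff]
      refine ⟨fun u v => reachable_of_edist_ne_top ?_, ⟨⟨sr 0, vsr 0⟩⟩⟩
      intro htop
      have hc := cov u v
      rw [htop] at hc
      simp at hc
    refine ⟨hconn, ?_⟩
    have hne12 : (⟨r 1, hv1⟩ : ((relCenter (DihedralGroup n) H)ᶜ : Set (DihedralGroup n)))
        ≠ ⟨r 2, hv2⟩ := by
      refine neRR ?_
      intro h
      have hcast := congrArg ψ h
      rw [map_one, hψ2] at hcast
      exact absurd hcast (by decide)
    have hnadj : ¬ Γ.Adj ⟨r 1, hv1⟩ ⟨r 2, hv2⟩ := by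
      rintro ⟨-, -, hc, -⟩
      apply hc
      show comm' (r 1) (r 2) = g
      rw [comm'_rr, hg1, one_def]
    have hd2 : Γ.edist ⟨r 1, hv1⟩ ⟨r 2, hv2⟩ = 2 := by
      have hle := cov ⟨r 1, hv1⟩ ⟨r 2, hv2⟩
      have hnt : Γ.edist ⟨r 1, hv1⟩ ⟨r 2, hv2⟩ ≠ ⊤ := by
        intro htop
        rw [htop] at hle
        simp at hle
      have h0 : Γ.edist ⟨r 1, hv1⟩ ⟨r 2, hv2⟩ ≠ 0 := by
        rw [ne_eq, edist_eq_zero_iff]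
        exact hne12
      have h1 : Γ.edist ⟨r 1, hv1⟩ ⟨r 2, hv2⟩ ≠ 1 := by
        rw [ne_eq, edist_eq_one_iff_adj]
        exact hnadj
      obtain ⟨m, hm⟩ : ∃ m : ℕ, Γ.edist ⟨r 1, hv1⟩ ⟨r 2, hv2⟩ = m :=
        ⟨_, (ENat.coe_toNat hnt).symm⟩
      rw [hm] at hle h0 h1 ⊢
      norm_cast at hle h0 h1 ⊢
      omega
    have hediam : Γ.ediam = 2 :=
      le_antisymm (ediam_le_of_edist_le cov) (by rw [← hd2]; exact edist_le_ediam)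
    show Γ.ediam.toNat = 2
    rw [hediam]
    rfl
  · -- g ≠ 1 : diameter at most 3
    intro hg0
    have ht0 : t ≠ 0 := by
      intro h
      apply hg0
      rw [hgr, h]
      exact one_def.symm
    have hginv : g⁻¹ = r (-t) := by rw [hgr, r_inv]
    have hdodge : ∀ c : ZMod n, ψ c ≠ ψ t →
        ((r c : DihedralGroup n) ≠ g ∧ (r c : DihedralGroup n) ≠ g⁻¹) := by
      intro c hc
      constructor
      · rw [hgr]
        intro h
        exact hc (congrArg ψ (r.inj h))
      · rw [hginv]
        intro h
        have hcc := congrArg ψ (r.inj h)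
        rw [map_neg] at hcc
        apply hc
        rcases hψt with h2' | h2' <;> rw [h2'] at hcc ⊢ <;>
          · rw [hcc]; decide
    have hzero : ((r 0 : DihedralGroup n) ≠ g ∧ (r 0 : DihedralGroup n) ≠ g⁻¹) := by
      constructor
      · rw [hgr]
        intro h
        exact ht0 (r.inj h).symm
      · rw [hginv]
        intro h
        have h0 := r.inj h
        exact ht0 (neg_eq_zero.mp h0.symm)
    have cov : ∀ u v : ((relCenter (DihedralGroup n) H)ᶜ : Set (DihedralGroup n)),
        Γ.edist u v ≤ 3 := by
      have hedist_eq : ∀ (x : DihedralGroup n)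
          (hx hy : x ∈ (relCenter (DihedralGroup n) H)ᶜ),
          Γ.edist ⟨x, hx⟩ ⟨x, hy⟩ ≤ 3 := by
        intro x hx hy
        rw [show (⟨x, hx⟩ : ((relCenter (DihedralGroup n) H)ᶜ : Set (DihedralGroup n)))
          = ⟨x, hy⟩ from rfl, SimpleGraph.edist_self]
        exact zero_le
      rcases hψt with hA | hA
      · -- ψ t = 0 : hubs r 1, sr e
        have b_rr : ∀ (a b : ZMod n) (ha : r a ∈ (relCenter (DihedralGroup n) H)ᶜ)
            (hb : r b ∈ (relCenter (DihedralGroup n) H)ᶜ),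
            φ a = 0 → a ≠ b → Γ.Adj ⟨r a, ha⟩ ⟨r b, hb⟩ := by
          intro a b ha hb hpa hab
          refine ⟨neRR hab, Or.inl (hre a hpa), ?_, ?_⟩
          · show comm' (r a) (r b) ≠ g
            rw [comm'_rr]; exact hzero.1
          · show comm' (r a) (r b) ≠ g⁻¹
            rw [comm'_rr]; exact hzero.2
        have b_sr : ∀ (a b : ZMod n) (ha : sr a ∈ (relCenter (DihedralGroup n) H)ᶜ)
            (hb : r b ∈ (relCenter (DihedralGroup n) H)ᶜ),
            φ a = φ e → φ b ≠ 0 → Γ.Adj ⟨sr a, ha⟩ ⟨r b, hb⟩ := by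
          intro a b ha hb hpa hpb
          refine ⟨neSR, Or.inl (hsre a hpa), ?_, ?_⟩
          · show comm' (sr a) (r b) ≠ g
            rw [comm'_srr]
            exact (hdodge _ (by rw [podd b hpb, hA]; decide)).1
          · show comm' (sr a) (r b) ≠ g⁻¹
            rw [comm'_srr]
            exact (hdodge _ (by rw [podd b hpb, hA]; decide)).2
        have b_ss : ∀ (a b : ZMod n) (ha : sr a ∈ (relCenter (DihedralGroup n) H)ᶜ)
            (hb : sr b ∈ (relCenter (DihedralGroup n) H)ᶜ),
            φ a = φ e → φ b ≠ φ e → Γ.Adj ⟨sr a, ha⟩ ⟨sr b, hb⟩ := by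
          intro a b ha hb hpa hpb
          have hba : φ (b - a) ≠ 0 := by
            rw [map_sub, hpa]
            exact sub_ne_zero_of_ne hpb
          refine ⟨neSS (fun h => hpb (h ▸ hpa)), Or.inl (hsre a hpa), ?_, ?_⟩
          · show comm' (sr a) (sr b) ≠ g
            rw [comm'_srsr]
            exact (hdodge _ (by rw [podd _ hba, hA]; decide)).1
          · show comm' (sr a) (sr b) ≠ g⁻¹
            rw [comm'_srsr]
            exact (hdodge _ (by rw [podd _ hba, hA]; decide)).2
        have covRS2 : ∀ (i : ZMod n) (hx : r i ∈ (relCenter (DihedralGroup n) H)ᶜ)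
            (j : ZMod n) (hy : sr j ∈ (relCenter (DihedralGroup n) H)ᶜ),
            Γ.edist ⟨r i, hx⟩ ⟨sr j, hy⟩ ≤ 3 := by
          intro i hx j hy
          by_cases hpj : φ j = φ e
          · by_cases hpi : φ i = 0
            · refine le_trans (wk2 ⟨r 1, hv1⟩ (b_rr i 1 hx hv1 hpi ?_)
                ((b_sr j 1 hy hv1 hpj φ1).symm)) (by norm_num)
              intro h
              exact φ1 (h ▸ hpi)
            · exact le_trans (wk1 ((b_sr j i hy hx hpj hpi).symm)) (by norm_num)
          · by_cases hpi : φ i = 0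
            · refine wk3 ⟨r 1, hv1⟩ ⟨sr e, vsr e⟩ (b_rr i 1 hx hv1 hpi ?_)
                ((b_sr e 1 (vsr e) hv1 rfl φ1).symm) (b_ss e j (vsr e) hy rfl hpj)
              intro h
              exact φ1 (h ▸ hpi)
            · exact le_trans (wk2 ⟨sr e, vsr e⟩ ((b_sr e i (vsr e) hx rfl hpi).symm)
                (b_ss e j (vsr e) hy rfl hpj)) (by norm_num)
        rintro ⟨x, hx⟩ ⟨y, hy⟩
        cases x with
        | r i =>
          cases y with
          | r j =>
            by_cases hij : i = j
            · subst hij; exact hedist_eq _ hx hy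
            · by_cases hpi : φ i = 0
              · exact le_trans (wk1 (b_rr i j hx hy hpi hij)) (by norm_num)
              · by_cases hpj : φ j = 0
                · exact le_trans (wk1 ((b_rr j i hy hx hpj (Ne.symm hij)).symm)) (by norm_num)
                · refine le_trans (wk2 ⟨r 2, hv2⟩ ((b_rr 2 i hv2 hx φ2 ?_).symm)
                    (b_rr 2 j hv2 hy φ2 ?_)) (by norm_num)
                  · intro h; exact hpi (h ▸ φ2)
                  · intro h; exact hpj (h ▸ φ2)
          | sr j => exact covRS2 i hx j hy
        | sr i =>
          cases y with
          | r j =>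
            rw [SimpleGraph.edist_comm]
            exact covRS2 j hy i hx
          | sr j =>
            by_cases hpi : φ i = φ e
            · by_cases hpj : φ j = φ e
              · exact le_trans (wk2 ⟨r 1, hv1⟩ (b_sr i 1 hx hv1 hpi φ1)
                  ((b_sr j 1 hy hv1 hpj φ1).symm)) (by norm_num)
              · exact le_trans (wk1 (b_ss i j hx hy hpi hpj)) (by norm_num)
            · by_cases hpj : φ j = φ e
              · exact le_trans (wk1 ((b_ss j i hy hx hpj hpi).symm)) (by norm_num)
              · exact le_trans (wk2 ⟨sr e, vsr e⟩ ((b_ss e i (vsr e) hx rfl hpi).symm)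
                  (b_ss e j (vsr e) hy rfl hpj)) (by norm_num)
      · -- ψ t = 2 : r 2 is a universal vertex
        have univ : ∀ (y : DihedralGroup n) (hy : y ∈ (relCenter (DihedralGroup n) H)ᶜ),
            y ≠ r 2 → Γ.Adj ⟨r 2, hv2⟩ ⟨y, hy⟩ := by
          intro y hy hne
          cases y with
          | r j =>
            refine ⟨neRR (fun h => hne (congrArg DihedralGroup.r h.symm)), Or.inl (hre 2 φ2), ?_, ?_⟩
            · show comm' (r 2) (r j) ≠ g
              rw [comm'_rr]; exact hzero.1
            · show comm' (r 2) (r j) ≠ g⁻¹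
              rw [comm'_rr]; exact hzero.2
          | sr j =>
            have hc : ψ (-(2 * 2) : ZMod n) ≠ ψ t := by
              rw [map_neg, show ((2 : ZMod n) * 2) = 4 by norm_num, hψ4, hA]
              decide
            refine ⟨neRS, Or.inl (hre 2 φ2), ?_, ?_⟩
            · show comm' (r 2) (sr j) ≠ g
              rw [comm'_rsr]
              exact (hdodge _ hc).1
            · show comm' (r 2) (sr j) ≠ g⁻¹
              rw [comm'_rsr]
              exact (hdodge _ hc).2
        rintro ⟨x, hx⟩ ⟨y, hy⟩
        by_cases h1 : x = r 2
        · by_cases h2' : y = r 2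
          · subst h1; subst h2'; exact hedist_eq _ hx hy
          · subst h1
            exact le_trans (wk1 (univ y hy h2')) (by norm_num)
        · by_cases h2' : y = r 2
          · subst h2'
            rw [SimpleGraph.edist_comm]
            exact le_trans (wk1 (univ x hx h1)) (by norm_num)
          · exact le_trans (wk2 ⟨r 2, hv2⟩ ((univ x hx h1).symm) (univ y hy h2'))
              (by norm_num)
    have hconn : Γ.Connected := by
      rw [connected_iff]
      refine ⟨fun u v => reachable_of_edist_ne_top ?_, ⟨⟨sr 0, vsr 0⟩⟩⟩
      intro htop
      have hc := cov u v
      rw [htop] at hc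
      simp at hc
    refine ⟨hconn, ?_⟩
    have h3 : Γ.ediam ≤ 3 := ediam_le_of_edist_le cov
    have h3' := ENat.toNat_le_toNat h3 (by simp : (3 : ℕ∞) ≠ ⊤)
    show Γ.ediam.toNat ≤ 3
    simpa using h3'

lemma rot_mem_closure (n : ℕ) [NeZero n] (h2 : 2 ∣ n) (S : Set (DihedralGroup n))
    (hS : (r 1) ^ 2 ∈ S) (i : ZMod n) (hi : ZMod.castHom h2 (ZMod 2) i = 0) :
    r i ∈ Subgroup.closure S := by
  obtain ⟨j, rfl⟩ := even_decomp h2 hi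
  exact mem_closure_r S hS j

end Stmt16Aux


/-- for `n ≥ 8` divisible by `4`, `G = D_{2n}`, `H = ⟨a², b⟩` or
`⟨a², ab⟩` and `g ∈ ⟨a²⟩`: if `g = 1` then `Δ_{H,G}^g` is connected with diameter
`2`; if `g ≠ 1` then it is connected with diameter at most `3`. -/
theorem stmt16 (n : ℕ) (hn : 8 ≤ n) (h4 : 4 ∣ n)
    (H : Subgroup (DihedralGroup n))
    (hH : H = Subgroup.closure {(DihedralGroup.r 1 : DihedralGroup n) ^ 2, DihedralGroup.sr 0} ∨
          H = Subgroup.closure {(DihedralGroup.r 1 : DihedralGroup n) ^ 2, (DihedralGroup.r 1 : DihedralGroup n) * DihedralGroup.sr 0})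
    (g : DihedralGroup n)
    (hg : g ∈ Subgroup.zpowers ((DihedralGroup.r 1 : DihedralGroup n) ^ 2)) :
    (g = 1 → (gnc (DihedralGroup n) H g).Connected ∧
      (gnc (DihedralGroup n) H g).diam = 2) ∧
    (g ≠ 1 → (gnc (DihedralGroup n) H g).Connected ∧
      (gnc (DihedralGroup n) H g).diam ≤ 3) := by
  haveI : NeZero n := ⟨by omega⟩
  have h2 : 2 ∣ n := dvd_trans (by norm_num) h4
  open DihedralGroup in
  rcases hH with hH | hH
  · subst hH
    refine Stmt16Aux.main n hn h4 h2 _ 0 ?_ ?_ g hg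
    · intro i hi
      exact Stmt16Aux.rot_mem_closure n h2 _ (Set.mem_insert _ _) i hi
    · intro i hi
      rw [map_zero] at hi
      obtain ⟨j, rfl⟩ := Stmt16Aux.even_decomp h2 hi
      have hdecomp : (sr (2 * j) : DihedralGroup n) = r (2 * (-j)) * sr 0 := by
        rw [r_mul_sr]; congr 1; ring
      rw [hdecomp]
      refine mul_mem (Stmt16Aux.mem_closure_r _ (Set.mem_insert _ _) (-j))
        (Subgroup.subset_closure ?_)
      exact Set.mem_insert_of_mem _ rfl
  · subst hH
    refine Stmt16Aux.main n hn h4 h2 _ 1 ?_ ?_ g hg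
    · intro i hi
      exact Stmt16Aux.rot_mem_closure n h2 _ (Set.mem_insert _ _) i hi
    · intro i hi
      have hi' : ZMod.castHom h2 (ZMod 2) (i - 1) = 0 := by
        rw [map_sub, hi, sub_self]
      obtain ⟨j, hj⟩ := Stmt16Aux.even_decomp h2 hi'
      have hi2 : i = 2 * j + 1 := by linear_combination hj
      have hdecomp : (sr i : DihedralGroup n) = r (2 * (-j - 1)) * (r 1 * sr 0) := by
        rw [hi2, r_mul_sr, r_mul_sr]; congr 1; ring
      rw [hdecomp]
      refine mul_mem (Stmt16Aux.mem_closure_r _ (Set.mem_insert _ _) (-j - 1))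
        (Subgroup.subset_closure ?_)
      exact Set.mem_insert_of_mem _ rfl
end

section
/- Let n ≥ 8 be even with n/2 odd, G = D_{2n} the dihedral group of order 2n, H = ⟨a²⟩, and g ∈ ⟨a²⟩. If g = 1 then the graph Δ_{H,G}^g is not connected; if g ≠ 1 then Δ_{H,G}^g is connected and its diameter equals 2. -/
open SimpleGraph

namespace Stmt17Aux

open DihedralGroup

variable {n : ℕ}

lemma r_pow' (i : ZMod n) (k : ℕ) : (r i : DihedralGroup n) ^ k = r ((k : ZMod n) * i) := by
  induction k with
  | zero => simp
  | succ k ih => rw [pow_succ, ih, r_mul_r]; push_cast; ring_nf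

lemma r_inv' (i : ZMod n) : (r i : DihedralGroup n)⁻¹ = r (-i) := rfl

lemma sr_inv' (i : ZMod n) : (sr i : DihedralGroup n)⁻¹ = sr i := rfl

lemma r_zpow' (i : ZMod n) (z : ℤ) : (r i : DihedralGroup n) ^ z = r ((z : ZMod n) * i) := by
  obtain k | k := z
  · rw [Int.ofNat_eq_coe, zpow_natCast, r_pow']; push_cast; ring_nf
  · rw [zpow_negSucc, r_pow', r_inv']
    congr 1
    push_cast
    ring

lemma comm'_r_r (i j : ZMod n) : comm' (r i : DihedralGroup n) (r j) = 1 := by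
  simp only [comm', r_inv', r_mul_r, one_def]
  ring_nf

lemma comm'_r_sr (i j : ZMod n) : comm' (r i : DihedralGroup n) (sr j) = r (-(i + i)) := by
  simp only [comm', r_inv', sr_inv', r_mul_sr, sr_mul_r, sr_mul_sr]
  ring_nf

lemma comm'_sr_sr (i j : ZMod n) :
    comm' (sr i : DihedralGroup n) (sr j) = r ((j + j) - (i + i)) := by
  simp only [comm', sr_inv', sr_mul_sr, r_mul_sr, sr_mul_r]
  ring_nf

lemma even_val_iff [NeZero n] (hne : 2 ∣ n) (j : ZMod n) :
    Even (j.val) ↔ ∃ c : ZMod n, j = c + c := by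
  constructor
  · rintro ⟨k, hk⟩
    refine ⟨(k : ZMod n), ?_⟩
    have hj : ((j.val : ℕ) : ZMod n) = j := ZMod.natCast_rightInverse j
    rw [← hj, hk]
    push_cast
    ring
  · rintro ⟨c, rfl⟩
    rw [ZMod.val_add]
    rw [Nat.even_iff, Nat.mod_mod_of_dvd _ hne, ← Nat.even_iff]
    exact ⟨c.val, rfl⟩

lemma mem_H_r [NeZero n] (h2 : 2 ∣ n) (j : ZMod n) :
    r j ∈ Subgroup.zpowers ((r 1 : DihedralGroup n) ^ 2) ↔ Even j.val := by
  rw [even_val_iff h2, Subgroup.mem_zpowers_iff]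
  constructor
  · rintro ⟨k, hk⟩
    rw [← zpow_natCast, ← zpow_mul, r_zpow'] at hk
    refine ⟨(k : ZMod n), ?_⟩
    have := DihedralGroup.r.inj hk
    rw [← this]; push_cast; ring
  · rintro ⟨c, rfl⟩
    refine ⟨(c.val : ℤ), ?_⟩
    rw [← zpow_natCast, ← zpow_mul, r_zpow']
    congr 1
    have hc : ((c.val : ℕ) : ZMod n) = c := ZMod.natCast_rightInverse c
    push_cast
    rw [hc]; ring

lemma sr_not_mem_H (j : ZMod n) :
    sr j ∉ Subgroup.zpowers ((r 1 : DihedralGroup n) ^ 2) := by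
  rw [Subgroup.mem_zpowers_iff]
  rintro ⟨k, hk⟩
  rw [← zpow_natCast, ← zpow_mul, r_zpow'] at hk
  exact absurd hk (by simp)

lemma double_ne_zero [NeZero n] (hodd : Odd (n / 2)) (j : ZMod n) (hj : Even j.val)
    (hjne : j ≠ 0) : j + j ≠ 0 := by
  intro h
  have hv : (j.val + j.val) % n = 0 := by rw [← ZMod.val_add, h, ZMod.val_zero]
  have hlt : j.val < n := ZMod.val_lt j
  have hdvd : n ∣ j.val + j.val := Nat.dvd_of_mod_eq_zero hv
  have hne0 : j.val ≠ 0 := fun h0 => hjne (by rwa [← ZMod.val_eq_zero])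
  obtain ⟨k, hk⟩ := hdvd
  have hn0 : 0 < n := Nat.pos_of_ne_zero (NeZero.ne n)
  have hk2 : k < 2 := by nlinarith
  interval_cases k
  · omega
  · have : j.val = n / 2 := by omega
    rw [this] at hj
    exact (Nat.not_even_iff_odd.mpr hodd) hj

lemma not_mem_center [NeZero n] (h2 : 2 ∣ n) (hodd : Odd (n / 2))
    (x : DihedralGroup n) (hx : x ≠ 1) :
    x ∉ relCenter (DihedralGroup n) (Subgroup.zpowers ((r 1 : DihedralGroup n) ^ 2)) := by
  rintro ⟨hH, hcomm⟩
  obtain j | j := x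
  · have hj : j ≠ 0 := fun h => hx (by rw [h, one_def])
    have hev : Even j.val := (mem_H_r h2 j).mp hH
    have := hcomm (sr 0)
    rw [r_mul_sr, sr_mul_r] at this
    have h0 : (0 : ZMod n) - j = 0 + j := DihedralGroup.sr.inj this
    have : j + j = 0 := by linear_combination -h0
    exact double_ne_zero hodd j hev hj this
  · exact sr_not_mem_H j hH

end Stmt17Aux

/-- for even `n ≥ 8` with `n/2` odd, `G = D_{2n}`, `H = ⟨a²⟩` and
`g ∈ ⟨a²⟩`: if `g = 1` then `Δ_{H,G}^g` is not connected; if `g ≠ 1` then it is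
connected with diameter `2`. -/
theorem stmt17 (n : ℕ) (hn : 8 ≤ n) (hne : Even n) (hodd : Odd (n / 2))
    (g : DihedralGroup n)
    (hg : g ∈ Subgroup.zpowers ((DihedralGroup.r 1 : DihedralGroup n) ^ 2)) :
    (g = 1 → ¬ (gnc (DihedralGroup n) (Subgroup.zpowers ((DihedralGroup.r 1 : DihedralGroup n) ^ 2)) g).Connected) ∧
    (g ≠ 1 → (gnc (DihedralGroup n) (Subgroup.zpowers ((DihedralGroup.r 1 : DihedralGroup n) ^ 2)) g).Connected ∧
      (gnc (DihedralGroup n) (Subgroup.zpowers ((DihedralGroup.r 1 : DihedralGroup n) ^ 2)) g).diam = 2) := by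
  haveI : NeZero n := ⟨by omega⟩
  haveI : Fact (1 < n) := ⟨by omega⟩
  have h2 : 2 ∣ n := hne.two_dvd
  have hn10 : 10 ≤ n := by
    obtain ⟨p, hp⟩ := hne; obtain ⟨q, hq⟩ := hodd; omega
  have hone : (1 : ZMod n) ≠ 0 := by
    intro h
    have := congrArg ZMod.val h
    rw [ZMod.val_one n, ZMod.val_zero] at this
    exact one_ne_zero this
  have hval : ∀ a : ℕ, a < n → ((a : ZMod n)).val = a := fun a ha => by
    rw [ZMod.val_natCast, Nat.mod_eq_of_lt ha]
  have hdist : ∀ a b : ℕ, a < b → b - a < n → ((a : ZMod n) ≠ (b : ZMod n)) := by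
    intro a b h1 hlt h
    rw [ZMod.natCast_eq_natCast_iff] at h
    have hd := (Nat.modEq_iff_dvd' h1.le).mp h
    have := Nat.le_of_dvd (by omega) hd
    omega
  have hr1H : (DihedralGroup.r 1 : DihedralGroup n) ∉
      Subgroup.zpowers ((DihedralGroup.r 1 : DihedralGroup n) ^ 2) := by
    rw [Stmt17Aux.mem_H_r h2, ZMod.val_one n]
    decide
  constructor
  · -- g = 1 case
    rintro rfl hcon
    have hv1 : (DihedralGroup.r 1 : DihedralGroup n) ∈
        (relCenter (DihedralGroup n) (Subgroup.zpowers ((DihedralGroup.r 1 : DihedralGroup n) ^ 2)))ᶜ :=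
      Stmt17Aux.not_mem_center h2 hodd _ (by
        rw [DihedralGroup.one_def]
        intro h
        exact hone (DihedralGroup.r.inj h))
    have hv0 : (DihedralGroup.sr 0 : DihedralGroup n) ∈
        (relCenter (DihedralGroup n) (Subgroup.zpowers ((DihedralGroup.r 1 : DihedralGroup n) ^ 2)))ᶜ :=
      Stmt17Aux.not_mem_center h2 hodd _ (by rw [DihedralGroup.one_def]; intro h; cases h)
    obtain ⟨w⟩ := hcon.preconnected ⟨DihedralGroup.r 1, hv1⟩ ⟨DihedralGroup.sr 0, hv0⟩
    cases w with
    | cons hadj p =>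
      obtain ⟨hne', hmem, hc1, hc2⟩ := hadj
      rename_i u
      rcases hmem with hmem | hmem
      · exact hr1H hmem
      · obtain ⟨x, hx⟩ := u
        obtain j | j := x
        · exact hc1 (Stmt17Aux.comm'_r_r 1 j)
        · exact Stmt17Aux.sr_not_mem_H j hmem
  · -- g ≠ 1 case
    intro hgne
    obtain ⟨z, hz⟩ := Subgroup.mem_zpowers_iff.mp hg
    rw [← zpow_natCast, ← zpow_mul, Stmt17Aux.r_zpow'] at hz
    set m : ZMod n := (((2 : ℕ) * z : ℤ) : ZMod n) * 1 with hm
    have hgr : g = DihedralGroup.r m := hz.symm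
    have hm0 : m ≠ 0 := by
      intro h
      exact hgne (by rw [hgr, h, ← DihedralGroup.one_def])
    have hginv : g⁻¹ = DihedralGroup.r (-m) := by rw [hgr]; rfl
    have key : ∃ c : ZMod n, Even c.val ∧ c ≠ 0 ∧ c + c ≠ m ∧ c + c ≠ -m := by
      have e48 : ((4 : ℕ) : ZMod n) ≠ ((8 : ℕ) : ZMod n) := hdist 4 8 (by norm_num) (by omega)
      have e412 : ((4 : ℕ) : ZMod n) ≠ ((12 : ℕ) : ZMod n) := hdist 4 12 (by norm_num) (by omega)
      have e812 : ((8 : ℕ) : ZMod n) ≠ ((12 : ℕ) : ZMod n) := hdist 8 12 (by norm_num) (by omega)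
      have mkc : ∀ a : ℕ, a < n → Even a → a ≠ 0 → (Even ((a : ZMod n)).val ∧ (a : ZMod n) ≠ 0) := by
        intro a ha hev ha0
        rw [hval a ha]
        refine ⟨hev, fun h => ha0 ?_⟩
        have := congrArg ZMod.val h
        rwa [hval a ha, ZMod.val_zero] at this
      have s2 : ((2 : ℕ) : ZMod n) + ((2 : ℕ) : ZMod n) = ((4 : ℕ) : ZMod n) := by push_cast; ring
      have s4 : ((4 : ℕ) : ZMod n) + ((4 : ℕ) : ZMod n) = ((8 : ℕ) : ZMod n) := by push_cast; ring
      have s6 : ((6 : ℕ) : ZMod n) + ((6 : ℕ) : ZMod n) = ((12 : ℕ) : ZMod n) := by push_cast; ring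
      by_cases h4 : ((4 : ℕ) : ZMod n) = m ∨ ((4 : ℕ) : ZMod n) = -m
      · by_cases h8 : ((8 : ℕ) : ZMod n) = m ∨ ((8 : ℕ) : ZMod n) = -m
        · obtain ⟨he, h0⟩ := mkc 6 (by omega) (by decide) (by decide)
          refine ⟨((6 : ℕ) : ZMod n), he, h0, ?_, ?_⟩ <;> rw [s6] <;> intro h
          · rcases h4 with h4 | h4
            · exact e412 (h4.trans h.symm)
            · rcases h8 with h8 | h8
              · exact e812 (h8.trans h.symm)
              · exact e48 (h4.trans h8.symm)
          · rcases h4 with h4 | h4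
            · rcases h8 with h8 | h8
              · exact e48 (h4.trans h8.symm)
              · exact e812 (h8.trans h.symm)
            · exact e412 (h4.trans h.symm)
        · push_neg at h8
          obtain ⟨he, h0⟩ := mkc 4 (by omega) (by decide) (by decide)
          exact ⟨((4 : ℕ) : ZMod n), he, h0, by rw [s4]; exact h8.1, by rw [s4]; exact h8.2⟩
      · push_neg at h4
        obtain ⟨he, h0⟩ := mkc 2 (by omega) (by decide) (by decide)
        exact ⟨((2 : ℕ) : ZMod n), he, h0, by rw [s2]; exact h4.1, by rw [s2]; exact h4.2⟩
    obtain ⟨c, hcev, hc0, hcm, hcmn⟩ := key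
    set H := Subgroup.zpowers ((DihedralGroup.r 1 : DihedralGroup n) ^ 2) with hHdef
    set G' := gnc (DihedralGroup n) H g with hG'
    have hcH : DihedralGroup.r c ∈ H := (Stmt17Aux.mem_H_r h2 c).mpr hcev
    let hub : ((relCenter (DihedralGroup n) H)ᶜ : Set (DihedralGroup n)) :=
      ⟨DihedralGroup.r c, Stmt17Aux.not_mem_center h2 hodd _ (by
        rw [DihedralGroup.one_def]
        intro h
        exact hc0 (DihedralGroup.r.inj h))⟩
    have hubAdj : ∀ v, v ≠ hub → G'.Adj hub v := by
      rintro ⟨x, hx⟩ hv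
      refine ⟨fun h => hv h.symm, Or.inl hcH, ?_, ?_⟩ <;> obtain j | j := x
      · rw [Stmt17Aux.comm'_r_r, hgr, DihedralGroup.one_def]
        intro h
        exact hm0 (DihedralGroup.r.inj h).symm
      · rw [Stmt17Aux.comm'_r_sr, hgr]
        intro h
        exact hcmn (neg_eq_iff_eq_neg.mp (DihedralGroup.r.inj h))
      · rw [Stmt17Aux.comm'_r_r, hginv, DihedralGroup.one_def]
        intro h
        have := DihedralGroup.r.inj h
        exact hm0 (neg_eq_zero.mp this.symm)
      · rw [Stmt17Aux.comm'_r_sr, hginv]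
        intro h
        exact hcm (neg_injective (DihedralGroup.r.inj h))
    have hreach : ∀ u, G'.Reachable u hub := by
      intro u
      by_cases h : u = hub
      · exact h ▸ Reachable.refl u
      · exact ((hubAdj u h).symm).reachable
    have hconn : G'.Connected := by
      rw [connected_iff]
      exact ⟨fun u v => (hreach u).trans (hreach v).symm, ⟨hub⟩⟩
    refine ⟨hconn, ?_⟩
    have hle : G'.ediam ≤ 2 := by
      apply ediam_le_of_edist_le
      intro u v
      by_cases huv : u = v
      · subst huv; simp [SimpleGraph.edist_self]
      by_cases hu : u = hub
      · subst hu
        have := G'.edist_le ((hubAdj v (fun h => huv h.symm)).toWalk)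
        simpa using this.trans (by norm_num)
      by_cases hv : v = hub
      · subst hv
        have := G'.edist_le ((hubAdj u (fun h => huv h)).symm.toWalk)
        simpa using this.trans (by norm_num)
      · have := G'.edist_le (SimpleGraph.Walk.cons (hubAdj u hu).symm ((hubAdj v hv).toWalk))
        simpa using this
    have hv0 : (DihedralGroup.sr 0 : DihedralGroup n) ∈ (relCenter (DihedralGroup n) H)ᶜ :=
      Stmt17Aux.not_mem_center h2 hodd _ (by rw [DihedralGroup.one_def]; intro h; cases h)
    have hv1 : (DihedralGroup.sr 1 : DihedralGroup n) ∈ (relCenter (DihedralGroup n) H)ᶜ :=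
      Stmt17Aux.not_mem_center h2 hodd _ (by rw [DihedralGroup.one_def]; intro h; cases h)
    set w0 : ((relCenter (DihedralGroup n) H)ᶜ : Set (DihedralGroup n)) := ⟨DihedralGroup.sr 0, hv0⟩
    set w1 : ((relCenter (DihedralGroup n) H)ᶜ : Set (DihedralGroup n)) := ⟨DihedralGroup.sr 1, hv1⟩
    have hne01 : w0 ≠ w1 := by
      intro h
      have : (DihedralGroup.sr 0 : DihedralGroup n) = DihedralGroup.sr 1 := congrArg Subtype.val h
      exact hone (DihedralGroup.sr.inj this).symm
    have hnadj : ¬ G'.Adj w0 w1 := by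
      rintro ⟨-, hmem, -⟩
      rcases hmem with hmem | hmem <;> exact Stmt17Aux.sr_not_mem_H _ hmem
    have hd0 : G'.edist w0 w1 ≠ 0 := fun h => hne01 (SimpleGraph.edist_eq_zero_iff.mp h)
    have hd1 : G'.edist w0 w1 ≠ 1 := fun h => hnadj (SimpleGraph.edist_eq_one_iff_adj.mp h)
    have hge : (2 : ℕ∞) ≤ G'.edist w0 w1 := by
      have h1lt : 1 < G'.edist w0 w1 :=
        lt_of_le_of_ne (ENat.one_le_iff_ne_zero.mpr hd0) (Ne.symm hd1)
      have := Order.add_one_le_of_lt h1lt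
      norm_num at this ⊢
      exact this
    have hediam : G'.ediam = 2 :=
      le_antisymm hle (hge.trans SimpleGraph.edist_le_ediam)
    have : G'.diam = G'.ediam.toNat := rfl
    rw [this, hediam]
    rfl
end
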